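/- arXiv:2512.19040 — 5 statements merged into one kernel-verified Lean document; each statement's English description precedes it below -/
import Mathlib

section
/- Let G be a connected graph and r ≥ 1 an integer. Then the ball B_G(v, 2r/2) is a path for every vertex v of G if and only if G is a path or a cycle of length greater than 2r. -/
open SimpleGraph

/-- `G` is an interval graph: vertices can be assigned nonempty closed real intervals such that
distinct vertices are adjacent iff their intervals intersect. -/
def IsIntervalGraph {V : Type*} (G : SimpleGraph V) : Prop :=
  ∃ I : V → Set ℝ, (∀ v, ∃ a b : ℝ, a ≤ b ∧ I v = Set.Icc a b) ∧
    ∀ u v : V, u ≠ v → (G.Adj u v ↔ (I u ∩ I v).Nonempty)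

/-- The ball `B_G(v, r/2)`: vertices at distance at most `⌊r/2⌋` from `v`, and edges `xy` of `G`
with `d(v,x) + d(v,y) < r`. -/
def ball {V : Type*} (G : SimpleGraph V) (v : V) (r : ℕ) : G.Subgraph where
  verts := {x | G.Reachable v x ∧ G.dist v x ≤ r / 2}
  Adj x y := G.Adj x y ∧ (G.Reachable v x ∧ G.dist v x ≤ r / 2) ∧
    (G.Reachable v y ∧ G.dist v y ≤ r / 2) ∧ G.dist v x + G.dist v y < r
  adj_sub h := h.1
  edge_vert h := h.2.1
  symm := ⟨fun x y h => ⟨h.1.symm, h.2.2.1, h.2.1, by have := h.2.2.2; omega⟩⟩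

/-- `G` is `r`-locally interval if all its `r/2`-balls are interval graphs. -/
def LocallyInterval {V : Type*} (G : SimpleGraph V) (r : ℕ) : Prop :=
  ∀ v : V, IsIntervalGraph (_root_.ball G v r).coe

/-- `G` is a path graph (on at least one vertex). -/
def IsPathGraph {V : Type*} (G : SimpleGraph V) : Prop :=
  ∃ n : ℕ, 1 ≤ n ∧ Nonempty (G ≃g pathGraph n)

/-- `G` contains an induced subgraph isomorphic to `H`. -/
def HasInducedCopy {V W : Type*} (G : SimpleGraph V) (H : SimpleGraph W) : Prop :=
  ∃ s : Set V, Nonempty (G.induce s ≃g H)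

/-- `G` is chordal: no induced cycle of length at least 4. -/
def IsChordal {V : Type*} (G : SimpleGraph V) : Prop :=
  ∀ n : ℕ, 4 ≤ n → ¬ HasInducedCopy G (cycleGraph n)

/-- `G` is `r`-chordal: no induced cycle of length `ℓ` with `4 ≤ ℓ ≤ r`. -/
def RChordal {V : Type*} (G : SimpleGraph V) (r : ℕ) : Prop :=
  ∀ n : ℕ, 4 ≤ n → n ≤ r → ¬ HasInducedCopy G (cycleGraph n)

/-- The wheel `W_n`: a cycle of length `n` together with a vertex adjacent to all its vertices. -/
def wheel (n : ℕ) : SimpleGraph (Option (Fin n)) :=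
  SimpleGraph.fromRel
    (fun u v => u = none ∨ ∃ a b : Fin n, u = some a ∧ v = some b ∧ (cycleGraph n).Adj a b)

/-- `G` is wheel-free: no induced `W_n` for `n ≥ 4`. -/
def WheelFree {V : Type*} (G : SimpleGraph V) : Prop :=
  ∀ n : ℕ, 4 ≤ n → ¬ HasInducedCopy G (wheel n)

/-- `A` is a circular-arc representation of `G` over the cycle `cycleGraph n`: each vertex is
assigned a nonempty subpath of the cycle, and distinct vertices are adjacent iff their subpaths
share a vertex. -/
def IsCircularArcRep {V : Type*} {n : ℕ} (G : SimpleGraph V)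
    (A : V → (cycleGraph n).Subgraph) : Prop :=
  (∀ v : V, IsPathGraph (A v).coe) ∧
    ∀ u v : V, u ≠ v → (G.Adj u v ↔ ((A u).verts ∩ (A v).verts).Nonempty)

/-- `G` is a circular-arc graph. -/
def IsCircularArcGraph {V : Type*} (G : SimpleGraph V) : Prop :=
  ∃ n : ℕ, 3 ≤ n ∧ ∃ A : V → (cycleGraph n).Subgraph, IsCircularArcRep G A

/-- `G` is an `r`-acyclic circular-arc graph: it has a circular-arc representation in which the
union of the arcs of any at most `r` vertices is acyclic. -/
def IsRAcyclicCircularArcGraph {V : Type*} (G : SimpleGraph V) (r : ℕ) : Prop :=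
  ∃ n : ℕ, 3 ≤ n ∧ ∃ A : V → (cycleGraph n).Subgraph, IsCircularArcRep G A ∧
    ∀ X : Finset V, X.card ≤ r → ((⨆ x ∈ X, A x).coe).IsAcyclic

/-- The long claw: `K_{1,3}` with every edge subdivided once. Center `0`, middle vertices
`1, 2, 3`, leaves `4, 5, 6`. -/
def longClaw : SimpleGraph (Fin 7) :=
  SimpleGraph.fromEdgeSet {s(0,1), s(0,2), s(0,3), s(1,4), s(2,5), s(3,6)}

/-- The long claw plus one leaf–leaf edge. -/
def augLongClaw1 : SimpleGraph (Fin 7) :=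
  SimpleGraph.fromEdgeSet {s(0,1), s(0,2), s(0,3), s(1,4), s(2,5), s(3,6), s(4,5)}

/-- The long claw plus two leaf–leaf edges. -/
def augLongClaw2 : SimpleGraph (Fin 7) :=
  SimpleGraph.fromEdgeSet {s(0,1), s(0,2), s(0,3), s(1,4), s(2,5), s(3,6), s(4,5), s(5,6)}

/-- The long claw plus all three leaf–leaf edges. -/
def augLongClaw3 : SimpleGraph (Fin 7) :=
  SimpleGraph.fromEdgeSet {s(0,1), s(0,2), s(0,3), s(1,4), s(2,5), s(3,6), s(4,5), s(5,6), s(4,6)}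

/-- The cone over `G`: `G` plus one new vertex adjacent to every vertex of `G`. -/
def cone {V : Type*} (G : SimpleGraph V) : SimpleGraph (Option V) :=
  SimpleGraph.fromRel (fun u v => u = none ∨ ∃ a b : V, u = some a ∧ v = some b ∧ G.Adj a b)

section Aux
open scoped Fin.CommRing Fin.NatCast
variable {V W : Type*} {G : SimpleGraph V} {H : SimpleGraph W}

theorem dist_iso_le (e : G ≃g H) (u v : V) (hr : G.Reachable u v) :
    H.dist (e u) (e v) ≤ G.dist u v := by
  obtain ⟨p, hp⟩ := hr.exists_walk_length_eq_dist
  calc H.dist (e u) (e v) ≤ (p.map e.toHom).length := dist_le _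
  _ = G.dist u v := by rw [SimpleGraph.Walk.length_map, hp]

theorem iso_dist (e : G ≃g H) (u v : V) : H.dist (e u) (e v) = G.dist u v := by
  by_cases hr : G.Reachable u v
  · refine le_antisymm (dist_iso_le e u v hr) ?_
    have := dist_iso_le e.symm (e u) (e v) (Iso.reachable_iff.mpr hr)
    simpa using this
  · have hr' : ¬ H.Reachable (e u) (e v) := fun h => hr (Iso.reachable_iff.mp h)
    rw [SimpleGraph.dist, SimpleGraph.dist,
      SimpleGraph.edist_eq_top_of_not_reachable hr,
      SimpleGraph.edist_eq_top_of_not_reachable hr']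

theorem mem_ball_iff (e : G ≃g H) (v : V) (R : ℕ) (x : V) :
    x ∈ (_root_.ball G v R).verts ↔ (e x) ∈ (_root_.ball H (e v) R).verts := by
  simp only [_root_.ball, Set.mem_setOf_eq, Iso.reachable_iff, iso_dist]

def ballIso (e : G ≃g H) (v : V) (R : ℕ) :
    (_root_.ball G v R).coe ≃g (_root_.ball H (e v) R).coe where
  toEquiv := Equiv.subtypeEquiv e.toEquiv (fun x => mem_ball_iff e v R x)
  map_rel_iff' := by
    rintro ⟨x, hx⟩ ⟨y, hy⟩
    simp only [Equiv.subtypeEquiv, Subgraph.coe_adj, Equiv.coe_fn_mk]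
    show (_root_.ball H (e v) R).Adj (e x) (e y) ↔ (_root_.ball G v R).Adj x y
    simp only [_root_.ball, Iso.map_adj_iff, Iso.reachable_iff, iso_dist]

theorem isPathGraph_of_iso (e : G ≃g H) (h : IsPathGraph H) : IsPathGraph G := by
  obtain ⟨n, hn, ⟨f⟩⟩ := h
  exact ⟨n, hn, ⟨e.trans f⟩⟩

theorem pathGraph_no3 {m : ℕ} (p a b c : Fin m) (ha : (pathGraph m).Adj p a)
    (hb : (pathGraph m).Adj p b) (hc : (pathGraph m).Adj p c) : a = b ∨ a = c ∨ b = c := by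
  rw [pathGraph_adj] at ha hb hc
  have := Fin.ext_iff (a := a) (b := b)
  have := Fin.ext_iff (a := a) (b := c)
  have := Fin.ext_iff (a := b) (b := c)
  omega

theorem cycle_two_nbrs {m : ℕ} (u : Fin (m+3)) :
    (cycleGraph (m+3)).Adj u (u - 1) ∧ (cycleGraph (m+3)).Adj u (u + 1) ∧ u - 1 ≠ u + 1 := by
    refine ⟨?_, ?_, ?_⟩
    · rw [cycleGraph_adj]; left; ring
    · rw [cycleGraph_adj]; right; ring
    · intro h
      have h2 : (u + 1) - (u - 1) = 2 := by ring
      rw [← h, sub_self] at h2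
      exact absurd (congrArg Fin.val h2) (by simp; rw [Nat.mod_eq_of_lt (by omega)]; omega)

theorem not_isPathGraph_cycleGraph {n : ℕ} (hn : 3 ≤ n) : ¬ IsPathGraph (cycleGraph n) := by
  obtain ⟨k, rfl⟩ : ∃ k, n = k + 3 := ⟨n - 3, by omega⟩
  rintro ⟨m, hm, ⟨f⟩⟩
  set z : Fin m := ⟨0, hm⟩ with hz
  obtain ⟨hm1, hm2, hne⟩ := cycle_two_nbrs (f.symm z)
  have h1 : (pathGraph m).Adj z (f (f.symm z - 1)) := by
    have := f.map_adj_iff.mpr hm1; simpa using this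
  have h2 : (pathGraph m).Adj z (f (f.symm z + 1)) := by
    have := f.map_adj_iff.mpr hm2; simpa using this
  rw [pathGraph_adj] at h1 h2
  have hzv : z.val = 0 := rfl
  have : f (f.symm z - 1) = f (f.symm z + 1) := by
    apply Fin.ext; omega
  exact hne (f.injective this)

theorem walk_nat_dist_le {n : ℕ} {i j : Fin n} (p : (pathGraph n).Walk i j) :
    Nat.dist i.val j.val ≤ p.length := by
  induction p with
  | nil => simp [Nat.dist]
  | @cons u w x h q ih =>
    rw [pathGraph_adj] at h
    simp only [Nat.dist] at ih ⊢
    simp only [SimpleGraph.Walk.length_cons]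
    omega

theorem pathGraph_connected' {n : ℕ} (i : Fin n) : (pathGraph n).Connected := by
  obtain ⟨m, rfl⟩ : ∃ m, n = m + 1 := ⟨n - 1, by have := i.2; omega⟩
  exact pathGraph_connected m

theorem pathGraph_dist {n : ℕ} (i j : Fin n) :
    (pathGraph n).dist i j = Nat.dist i.val j.val := by
  have conn := pathGraph_connected' i
  refine le_antisymm ?_ ?_
  · generalize hd : Nat.dist i.val j.val = d
    induction d generalizing i j with
    | zero =>
      have : i = j := Fin.ext (by simp [Nat.dist] at hd; omega)
      simp [this]
    | succ d ih =>
      rcases lt_trichotomy i.val j.val with hlt | heq | hgt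
      · have hk : i.val + 1 < n := by have := j.2; omega
        set k : Fin n := ⟨i.val + 1, hk⟩ with hkdef
        have hadj : (pathGraph n).Adj i k := by rw [pathGraph_adj]; left; rfl
        have h1 : (pathGraph n).dist i k = 1 := dist_eq_one_iff_adj.mpr hadj
        have h2 : (pathGraph n).dist k j ≤ d := ih k j (by simp [Nat.dist, hkdef] at hd ⊢; omega)
        calc (pathGraph n).dist i j ≤ _ + _ := conn.dist_triangle (v := k)
        _ ≤ d + 1 := by omega
      · exact absurd (Fin.ext heq) (by rintro rfl; simp [Nat.dist] at hd)
      · have hk : j.val + 1 < n := by have := i.2; omega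
        set k : Fin n := ⟨j.val + 1, hk⟩ with hkdef
        have hadj : (pathGraph n).Adj k j := by rw [pathGraph_adj]; right; rfl
        have h1 : (pathGraph n).dist k j = 1 := dist_eq_one_iff_adj.mpr hadj
        have h2 : (pathGraph n).dist i k ≤ d := ih i k (by simp [Nat.dist, hkdef] at hd ⊢; omega)
        calc (pathGraph n).dist i j ≤ _ + _ := conn.dist_triangle (v := k)
        _ ≤ d + 1 := by omega
  · obtain ⟨p, hp⟩ := (conn i j).exists_walk_length_eq_dist
    rw [← hp]
    exact walk_nat_dist_le p

theorem pathGraph_ball_isPath {n r : ℕ} (hr : 1 ≤ r) (v : Fin n) :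
    IsPathGraph (_root_.ball (pathGraph n) v (2*r)).coe := by
  have conn := pathGraph_connected' v
  have hn : 1 ≤ n := by have := v.2; omega
  set a : ℕ := v.val - r with ha
  set b : ℕ := min (v.val + r) (n - 1) with hb
  have hab : a ≤ b := by have := v.2; omega
  have hdiv : 2 * r / 2 = r := by omega
  have hmem : ∀ x : Fin n, x ∈ (_root_.ball (pathGraph n) v (2*r)).verts ↔ a ≤ x.val ∧ x.val ≤ b := by
    intro x
    simp only [_root_.ball, Set.mem_setOf_eq, hdiv, pathGraph_dist]
    have := x.2
    constructor
    · rintro ⟨-, h⟩; simp only [Nat.dist] at h; omega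
    · intro h; exact ⟨conn.preconnected v x, by simp only [Nat.dist]; omega⟩
  have hadj : ∀ x y : Fin n, a ≤ x.val → x.val ≤ b → a ≤ y.val → y.val ≤ b →
      ((_root_.ball (pathGraph n) v (2*r)).Adj x y ↔ (x.val + 1 = y.val ∨ y.val + 1 = x.val)) := by
    intro x y hx1 hx2 hy1 hy2
    simp only [_root_.ball, pathGraph_adj, pathGraph_dist, Nat.dist, hdiv]
    have := x.2; have := y.2
    constructor
    · rintro ⟨h, -⟩; omega
    · intro h
      refine ⟨h, ⟨conn.preconnected v x, by omega⟩, ⟨conn.preconnected v y, by omega⟩, by omega⟩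
  refine ⟨b - a + 1, by omega, ⟨?_⟩⟩
  have hv2 : ∀ x : (_root_.ball (pathGraph n) v (2*r)).verts, a ≤ x.1.val ∧ x.1.val ≤ b :=
    fun x => (hmem x.1).mp x.2
  refine ⟨⟨fun x => ⟨x.1.val - a, by have := hv2 x; omega⟩,
    fun k => ⟨⟨k.val + a, by have := k.2; have := v.2; omega⟩,
      (hmem _).mpr (by have := k.2; simp; omega)⟩, ?_, ?_⟩, ?_⟩
  · intro x
    have := hv2 x
    apply Subtype.ext
    apply Fin.ext
    simp only []
    omega
  · intro k
    have := k.2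
    apply Fin.ext
    simp only []
    omega
  · rintro ⟨x, hx⟩ ⟨y, hy⟩
    have h1 := (hmem x).mp hx
    have h2 := (hmem y).mp hy
    simp only [Equiv.coe_fn_mk, pathGraph_adj, Subgraph.coe_adj]
    rw [hadj x y h1.1 h1.2 h2.1 h2.2]
    omega

theorem cycleGraph_connected' {n : ℕ} (hn : 1 ≤ n) : (cycleGraph n).Connected := by
  obtain ⟨m, rfl⟩ : ∃ m, n = m + 1 := ⟨n - 1, by omega⟩
  exact (pathGraph_connected m).mono pathGraph_le_cycleGraph

theorem mod2 {a n : ℕ} (h : a < 2 * n) : (a % n = a ∧ a < n) ∨ (a % n = a - n ∧ n ≤ a) := by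
  rcases lt_or_ge a n with h' | h'
  · exact Or.inl ⟨Nat.mod_eq_of_lt h', h'⟩
  · right; refine ⟨?_, h'⟩; rw [Nat.mod_eq_sub_mod h', Nat.mod_eq_of_lt (by omega)]

theorem fin_sub_val_add {n : ℕ} (u w : Fin n) (hne : u ≠ w) :
    (u - w).val + (w - u).val = n ∧ 0 < (u - w).val ∧ 0 < (w - u).val := by
  have h1 : (u - w).val = (n - w.val + u.val) % n := by rw [Fin.sub_def]
  have h2 : (w - u).val = (n - u.val + w.val) % n := by rw [Fin.sub_def]
  have hu := u.2; have hw := w.2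
  have hne' : u.val ≠ w.val := fun h => hne (Fin.ext h)
  have m1 := mod2 (a := n - w.val + u.val) (n := n) (by omega)
  have m2 := mod2 (a := n - u.val + w.val) (n := n) (by omega)
  omega

theorem walk_cyc_le {n : ℕ} {v x : Fin n} (p : (cycleGraph n).Walk x v) :
    min (x - v).val (n - (x - v).val) ≤ p.length := by
  induction p with
  | nil => simp [Fin.sub_def]
  | @cons u w y h q ih =>
    haveI : NeZero n := ⟨by have := u.2; omega⟩
    have hne := h.ne
    rw [cycleGraph_adj'] at h
    obtain ⟨hCD, hC, hD⟩ := fin_sub_val_add u w hne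
    have hA : (u - y) = (w - y) + (u - w) := by ring
    have hA' : (u - y).val = ((w - y).val + (u - w).val) % n := by
      rw [hA, Fin.val_add]
    have h1 := (u - y).2
    have h2 := (w - y).2
    have h3 := (u - w).2
    have m1 := mod2 (a := (w - y).val + (u - w).val) (n := n) (by omega)
    simp only [SimpleGraph.Walk.length_cons]
    omega

theorem cyc_dist_le_nat {n : ℕ} (hn : 3 ≤ n) (v : Fin n) (k : ℕ) :
    haveI : NeZero n := ⟨by omega⟩
    (cycleGraph n).dist v (v + (k : Fin n)) ≤ k := by
  haveI : NeZero n := ⟨by omega⟩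
  have conn := cycleGraph_connected' (by omega : 1 ≤ n)
  induction k with
  | zero => simp
  | succ k ih =>
    have hadj : (cycleGraph n).Adj (v + (k : Fin n)) (v + ((k+1 : ℕ) : Fin n)) := by
      rw [cycleGraph_adj']
      right
      have h1 : (v + ((k+1 : ℕ) : Fin n)) - (v + (k : Fin n)) = ((1:ℕ) : Fin n) := by
        push_cast; ring
      rw [h1, Fin.val_natCast, Nat.mod_eq_of_lt (by omega)]
    have h1 : (cycleGraph n).dist (v + (k : Fin n)) (v + ((k+1:ℕ) : Fin n)) = 1 :=
      dist_eq_one_iff_adj.mpr hadj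
    calc (cycleGraph n).dist v (v + ((k+1:ℕ) : Fin n)) ≤ _ + _ :=
      conn.dist_triangle (v := v + (k : Fin n))
    _ ≤ k + 1 := by omega

theorem cycleGraph_dist {n : ℕ} (hn : 3 ≤ n) (v x : Fin n) :
    (cycleGraph n).dist v x = min (x - v).val (n - (x - v).val) := by
  haveI : NeZero n := ⟨by omega⟩
  have conn := cycleGraph_connected' (by omega : 1 ≤ n)
  refine le_antisymm ?_ ?_
  · by_cases hne : x = v
    · subst hne; simp [Fin.sub_def]
    · obtain ⟨hCD, hC, hD⟩ := fin_sub_val_add x v hne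
      have hx : x = v + ((x - v).val : Fin n) := by
        rw [Fin.cast_val_eq_self]; ring
      have b1 : (cycleGraph n).dist v x ≤ (x - v).val := by
        nth_rewrite 1 [hx]; exact cyc_dist_le_nat hn v _
      have b2 : (cycleGraph n).dist v x ≤ (v - x).val := by
        rw [SimpleGraph.dist_comm]
        have hv : v = x + ((v - x).val : Fin n) := by rw [Fin.cast_val_eq_self]; ring
        nth_rewrite 1 [hv]; exact cyc_dist_le_nat hn x _
      omega
  · obtain ⟨p, hp⟩ := (conn x v).exists_walk_length_eq_dist
    rw [SimpleGraph.dist_comm, ← hp]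
    exact walk_cyc_le p

theorem cyc_adj_dist_sum {n : ℕ} (hn : 3 ≤ n) (v x y : Fin n) (h : (cycleGraph n).Adj x y) :
    (cycleGraph n).dist v x + (cycleGraph n).dist v y ≤ n - 1 := by
  haveI : NeZero n := ⟨by omega⟩
  rw [cycleGraph_dist hn, cycleGraph_dist hn]
  rw [cycleGraph_adj'] at h
  have e1 : x - y = (x - v) - (y - v) := by ring
  have e2 : y - x = (y - v) - (x - v) := by ring
  have hxy : (x - y).val = (n - (y-v).val + (x-v).val) % n := by rw [e1, Fin.sub_def]
  have hyx : (y - x).val = (n - (x-v).val + (y-v).val) % n := by rw [e2, Fin.sub_def]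
  rw [hxy, hyx] at h
  have hA := (x - v).2; have hB := (y - v).2
  have m1 := mod2 (a := n - (y-v).val + (x-v).val) (n := n) (by omega)
  have m2 := mod2 (a := n - (x-v).val + (y-v).val) (n := n) (by omega)
  omega

theorem cycle_ball_full {n r : ℕ} (hn : 3 ≤ n) (hr : 1 ≤ r) (hle : n ≤ 2*r) (v : Fin n) :
    Nonempty ((_root_.ball (cycleGraph n) v (2*r)).coe ≃g cycleGraph n) := by
  have conn := cycleGraph_connected' (by omega : 1 ≤ n)
  have hdiv : 2*r/2 = r := by omega
  have hmem : ∀ x : Fin n, x ∈ (_root_.ball (cycleGraph n) v (2*r)).verts := by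
    intro x
    refine ⟨conn.preconnected v x, ?_⟩
    rw [hdiv, cycleGraph_dist hn]
    have := (x - v).2
    omega
  refine ⟨⟨⟨fun x => x.1, fun x => ⟨x, hmem x⟩, fun x => rfl, fun x => rfl⟩, ?_⟩⟩
  rintro ⟨x, hx⟩ ⟨y, hy⟩
  simp only [Equiv.coe_fn_mk, Subgraph.coe_adj]
  constructor
  · intro h
    refine ⟨h, hmem x, hmem y, ?_⟩
    have := cyc_adj_dist_sum hn v x y h
    omega
  · exact fun h => h.1

set_option maxHeartbeats 2000000 in
theorem cycle_ball_isPath {n r : ℕ} (hr : 1 ≤ r) (hlt : 2*r < n) (v : Fin n) :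
    IsPathGraph (_root_.ball (cycleGraph n) v (2*r)).coe := by
  have hn : 3 ≤ n := by omega
  haveI : NeZero n := ⟨by omega⟩
  have conn := cycleGraph_connected' (by omega : 1 ≤ n)
  have hdiv : 2*r/2 = r := by omega
  set t : Fin n → ℕ := fun x => (x - v).val with ht
  have htlt : ∀ x, t x < n := fun x => (x - v).2
  have hmem : ∀ x : Fin n, x ∈ (_root_.ball (cycleGraph n) v (2*r)).verts ↔ min (t x) (n - t x) ≤ r := by
    intro x
    simp only [_root_.ball, Set.mem_setOf_eq, hdiv, cycleGraph_dist hn]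
    exact ⟨fun h => h.2, fun h => ⟨conn.preconnected v x, h⟩⟩
  set f : ℕ → ℕ := fun s => if s ≤ r then r + s else r - (n - s) with hfdef
  have hf : ∀ s, (s ≤ r ∧ f s = r + s) ∨ (r < s ∧ f s = r - (n - s)) := by
    intro s
    by_cases h : s ≤ r
    · left; exact ⟨h, by simp [hfdef, h]⟩
    · right; exact ⟨by omega, by simp [hfdef, h]⟩
  have hrecov : ∀ x : Fin n, v + ((t x : ℕ) : Fin n) = x := by
    intro x
    rw [Fin.cast_val_eq_self]
    ring
  have htadd : ∀ (c : ℕ), t (v + (c : Fin n)) = c % n := by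
    intro c
    have : (v + (c : Fin n)) - v = (c : Fin n) := by ring
    rw [ht]
    simp only [this, Fin.val_natCast]
  refine ⟨2*r+1, by omega, ⟨?_⟩⟩
  refine ⟨⟨fun x => ⟨f (t x.1), ?_⟩,
    fun k => ⟨v + ((k.val + n - r : ℕ) : Fin n), ?_⟩, ?_, ?_⟩, ?_⟩
  · have h1 := (hmem x.1).mp x.2
    have := hf (t x.1); have := htlt x.1
    omega
  · rw [hmem, htadd]
    have hk := k.2
    have m := mod2 (a := k.val + n - r) (n := n) (by omega)
    omega
  · rintro ⟨x, hx⟩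
    have h1 := (hmem x).mp hx
    have h2 := htlt x
    have h3 := hf (t x)
    apply Subtype.ext
    show v + ((f (t x) + n - r : ℕ) : Fin n) = x
    conv_rhs => rw [← hrecov x]
    congr 1
    rw [← Fin.ofNat_eq_cast, ← Fin.ofNat_eq_cast]
    apply Fin.ext
    simp only [Fin.val_ofNat]
    have m := mod2 (a := f (t x) + n - r) (n := n) (by omega)
    have m2 : t x % n = t x := Nat.mod_eq_of_lt h2
    omega
  · rintro ⟨k, hk⟩
    apply Fin.ext
    show f (t (v + ((k + n - r : ℕ) : Fin n))) = k
    rw [htadd]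
    have m := mod2 (a := k + n - r) (n := n) (by omega)
    have h3 := hf ((k + n - r) % n)
    omega
  · rintro ⟨x, hx⟩ ⟨y, hy⟩
    have hA := (hmem x).mp hx
    have hB := (hmem y).mp hy
    have hAlt := htlt x; have hBlt := htlt y
    have hfA := hf (t x); have hfB := hf (t y)
    simp only [Equiv.coe_fn_mk, Subgraph.coe_adj, pathGraph_adj]
    have e1 : x - y = (x - v) - (y - v) := by ring
    have e2 : y - x = (y - v) - (x - v) := by ring
    have hxy : (x - y).val = (n - t y + t x) % n := by rw [e1, Fin.sub_def]
    have hyx : (y - x).val = (n - t x + t y) % n := by rw [e2, Fin.sub_def]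
    have m1 := mod2 (a := n - t y + t x) (n := n) (by omega)
    have m2 := mod2 (a := n - t x + t y) (n := n) (by omega)
    have htx : (x - v).val = t x := rfl
    have hty : (y - v).val = t y := rfl
    constructor
    · intro h
      refine ⟨?_, (hmem x).mpr hA, (hmem y).mpr hB, ?_⟩
      · rw [cycleGraph_adj', hxy, hyx]
        omega
      · rw [cycleGraph_dist hn, cycleGraph_dist hn]
        omega
    · rintro ⟨hadj, -, -, hsum⟩
      rw [cycleGraph_adj', hxy, hyx] at hadj
      rw [cycleGraph_dist hn, cycleGraph_dist hn] at hsum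
      show f (t x) + 1 = f (t y) ∨ f (t y) + 1 = f (t x)
      omega

section S4

variable {V : Type*} {G : SimpleGraph V}

theorem rdist_triangle {u v w : V} (h1 : G.Reachable u v) (h2 : G.Reachable v w) :
    G.dist u w ≤ G.dist u v + G.dist v w := by
  obtain ⟨p, hp⟩ := h1.exists_walk_length_eq_dist
  obtain ⟨q, hq⟩ := h2.exists_walk_length_eq_dist
  rw [← hp, ← hq, ← SimpleGraph.Walk.length_append]
  exact dist_le _

theorem exists_pred {v0 x : V} {k : ℕ} (hr : G.Reachable v0 x) (hd : G.dist v0 x = k + 1) :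
    ∃ u, G.Adj u x ∧ G.Reachable v0 u ∧ G.dist v0 u = k := by
  obtain ⟨p, hp⟩ := hr.exists_walk_length_eq_dist
  rw [hd] at hp
  obtain ⟨q, hql⟩ : ∃ q : G.Walk x v0, q.length = k + 1 := ⟨p.reverse, by simp [hp]⟩
  cases q with
  | nil => simp at hql
  | @cons _ u _ h q' =>
    have hru : G.Reachable v0 u := ⟨q'.reverse⟩
    refine ⟨u, h.symm, hru, ?_⟩
    have h1 : G.dist v0 u ≤ k := by
      have := dist_le q'.reverse
      simp only [SimpleGraph.Walk.length_reverse] at this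
      simp only [SimpleGraph.Walk.length_cons] at hql
      omega
    have h2 : G.dist v0 x ≤ G.dist v0 u + 1 := by
      have := rdist_triangle hru ⟨Walk.cons h.symm Walk.nil⟩
      have hle : G.dist u x ≤ 1 := by
        have := dist_le (Walk.cons h.symm (Walk.nil : G.Walk x x))
        simpa using this
      omega
    omega

theorem sphere_unique {v0 : V}
    (hdeg : ∀ v a b c : V, G.Adj v a → G.Adj v b → G.Adj v c → a = b ∨ a = c ∨ b = c)
    (h1 : ∀ a b : V, G.Adj v0 a → G.Adj v0 b → a = b) :
    ∀ k x y, G.Reachable v0 x → G.Reachable v0 y →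
      G.dist v0 x = k → G.dist v0 y = k → x = y := by
  intro k
  induction k using Nat.strong_induction_on with
  | _ k ih =>
    intro x y hrx hry hdx hdy
    match k with
    | 0 =>
      have hx := (hrx.dist_eq_zero_iff).mp hdx
      have hy := (hry.dist_eq_zero_iff).mp hdy
      rw [← hx, ← hy]
    | j + 1 =>
      by_contra hxy
      obtain ⟨ux, hax, hrux, hdux⟩ := exists_pred hrx hdx
      obtain ⟨uy, hay, hruy, hduy⟩ := exists_pred hry hdy
      have huu : ux = uy := ih j (by omega) ux uy hrux hruy hdux hduy
      subst huu
      match j with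
      | 0 =>
        have : ux = v0 := (hrux.symm.dist_eq_zero_iff).mp (by rwa [SimpleGraph.dist_comm])
        subst this
        exact hxy (h1 x y hax hay)
      | i + 1 =>
        obtain ⟨w, haw, hrw, hdw⟩ := exists_pred hrux hdux
        have hwx : w ≠ x := fun h => by subst h; omega
        have hwy : w ≠ y := fun h => by subst h; omega
        rcases hdeg ux x y w hax hay haw.symm with h | h | h
        · exact hxy h
        · exact hwx h.symm
        · exact hwy h.symm

variable {V : Type*} [Fintype V] {G : SimpleGraph V}

theorem path_mach (hconn : G.Connected)
    (hdeg : ∀ v a b c : V, G.Adj v a → G.Adj v b → G.Adj v c → a = b ∨ a = c ∨ b = c)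
    (v0 : V) (h1 : ∀ a b : V, G.Adj v0 a → G.Adj v0 b → a = b) :
    (∀ x, G.dist v0 x < Fintype.card V) ∧
    (∀ x y, G.dist v0 x = G.dist v0 y → x = y) ∧
    (∀ t, t < Fintype.card V → ∃ x, G.dist v0 x = t) ∧
    (∀ x y, G.Adj x y ↔ Nat.dist (G.dist v0 x) (G.dist v0 y) = 1) := by
  classical
  have hinj : ∀ x y, G.dist v0 x = G.dist v0 y → x = y := by
    intro x y h
    exact sphere_unique hdeg h1 (G.dist v0 y) x y (hconn v0 x) (hconn v0 y) h rfl
  have hdown : ∀ k, (∃ x, G.dist v0 x = k + 1) → ∃ y, G.dist v0 y = k := by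
    rintro k ⟨x, hx⟩
    obtain ⟨u, -, -, hu⟩ := exists_pred (hconn v0 x) hx
    exact ⟨u, hu⟩
  have hinit : ∀ k, (∃ x, G.dist v0 x = k) → ∀ j ≤ k, ∃ y, G.dist v0 y = j := by
    intro k
    induction k with
    | zero =>
      rintro hx j hj
      have hj0 : j = 0 := by omega
      subst hj0; exact hx
    | succ k ih =>
      rintro hx j hj
      rcases Nat.eq_or_lt_of_le hj with rfl | hj'
      · exact hx
      · exact ih (hdown k hx) j (by omega)
  have hlt : ∀ x, G.dist v0 x < Fintype.card V := by
    intro x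
    by_contra hge
    push_neg at hge
    have hall : ∀ j, j ≤ G.dist v0 x → ∃ y, G.dist v0 y = j := hinit (G.dist v0 x) ⟨x, rfl⟩
    choose F hF using hall
    have : Function.Injective (fun j : Fin (G.dist v0 x + 1) => F j.val (by omega)) := by
      intro i j hij
      simp only [] at hij
      have h2 := congrArg (G.dist v0) hij
      rw [hF, hF] at h2
      exact Fin.ext h2
    have hcard := Fintype.card_le_of_injective _ this
    simp only [Fintype.card_fin] at hcard
    omega
  refine ⟨hlt, hinj, ?_, ?_⟩
  · -- surjectivity
    intro t ht
    by_contra hne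
    push_neg at hne
    -- the image of D misses t, but D is injective into card V values... 
    have hinj' : Function.Injective (fun x : V => (⟨G.dist v0 x, hlt x⟩ : Fin (Fintype.card V))) := by
      intro x y h
      exact hinj x y (by simpa [Fin.ext_iff] using h)
    have hsurj := (Fintype.bijective_iff_injective_and_card _).mpr ⟨hinj', by simp⟩
    obtain ⟨x, hx⟩ := hsurj.2 ⟨t, ht⟩
    exact hne x (by simpa [Fin.ext_iff] using hx)
  · intro x y
    constructor
    · intro hadj
      have hne : G.dist v0 x ≠ G.dist v0 y := fun h => hadj.ne (hinj x y h)
      have h1' : G.dist v0 x ≤ G.dist v0 y + 1 := by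
        have := rdist_triangle (hconn v0 y) hadj.symm.reachable
        have h2 : G.dist y x ≤ 1 := by
          have := dist_le hadj.symm.toWalk
          simpa using this
        omega
      have h2' : G.dist v0 y ≤ G.dist v0 x + 1 := by
        have := rdist_triangle (hconn v0 x) hadj.reachable
        have h2 : G.dist x y ≤ 1 := by
          have := dist_le hadj.toWalk
          simpa using this
        omega
      simp only [Nat.dist]
      omega
    · intro hd
      simp only [Nat.dist] at hd
      rcases Nat.lt_or_ge (G.dist v0 x) (G.dist v0 y) with hlt' | hge'
      · have hyx : G.dist v0 y = G.dist v0 x + 1 := by omega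
        obtain ⟨u, hu, hru, hdu⟩ := exists_pred (hconn v0 y) hyx
        have : u = x := hinj u x hdu
        rwa [this] at hu
      · have hxy : G.dist v0 x = G.dist v0 y + 1 := by omega
        obtain ⟨u, hu, hru, hdu⟩ := exists_pred (hconn v0 x) hxy
        have huy : u = y := hinj u y hdu
        rw [huy] at hu
        exact hu.symm

end S4


variable {V : Type*} {G : SimpleGraph V}

theorem walk_to_subtype {w : V} {x y : V} (p : G.Walk x y) (hx : x ≠ w) (hy : y ≠ w)
    (hsup : w ∉ p.support) :
    (G.comap (Subtype.val : {v : V // v ≠ w} → V)).Reachable ⟨x, hx⟩ ⟨y, hy⟩ := by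
  induction p with
  | nil => rfl
  | @cons u t z h q ih =>
    rw [SimpleGraph.Walk.support_cons] at hsup
    have ht : t ≠ w := by
      intro hteq
      exact hsup (List.mem_cons_of_mem _ (hteq ▸ q.start_mem_support))
    have h1 : (G.comap (Subtype.val : {v : V // v ≠ w} → V)).Adj ⟨u, hx⟩ ⟨t, ht⟩ := h
    exact (h1.reachable).trans (ih ht hy (fun hm => hsup (List.mem_cons_of_mem _ hm)))

theorem cycle_mach [Fintype V] (hconn : G.Connected)
    (hdeg : ∀ v a b c : V, G.Adj v a → G.Adj v b → G.Adj v c → a = b ∨ a = c ∨ b = c)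
    (h2 : ∀ v : V, ∃ a b : V, a ≠ b ∧ G.Adj v a ∧ G.Adj v b) :
    ∃ n : ℕ, 3 ≤ n ∧ Nonempty (G ≃g cycleGraph n) := by
  classical
  obtain ⟨w⟩ := hconn.nonempty
  obtain ⟨a, b, hab, hwa, hwb⟩ := h2 w
  have ha : a ≠ w := hwa.ne'
  have hb : b ≠ w := hwb.ne'
  set G' : SimpleGraph {x : V // x ≠ w} := G.comap Subtype.val with hG'
  have w_nbr : ∀ y, G.Adj w y → y = a ∨ y = b := by
    intro y hy
    rcases hdeg w y a b hy hwa hwb with h | h | h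
    exacts [Or.inl h, Or.inr h, absurd h hab]
  have hdeg' : ∀ (v p q s : {x : V // x ≠ w}), G'.Adj v p → G'.Adj v q → G'.Adj v s →
      p = q ∨ p = s ∨ q = s := by
    intro v p q s hp hq hs
    rcases hdeg v.1 p.1 q.1 s.1 hp hq hs with h | h | h
    exacts [Or.inl (Subtype.ext h), Or.inr (Or.inl (Subtype.ext h)),
      Or.inr (Or.inr (Subtype.ext h))]
  have h1' : ∀ (c : V), G.Adj w c → ∀ (hc : c ≠ w) (p q : {x : V // x ≠ w}),
      G'.Adj ⟨c, hc⟩ p → G'.Adj ⟨c, hc⟩ q → p = q := by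
    intro c hwc hc p q hp hq
    rcases hdeg c p.1 q.1 w hp hq hwc.symm with h | h | h
    · exact Subtype.ext h
    · exact absurd h p.2
    · exact absurd h q.2
  have reach_ab : ∀ (x : V) (hx : x ≠ w),
      G'.Reachable ⟨x, hx⟩ ⟨a, ha⟩ ∨ G'.Reachable ⟨x, hx⟩ ⟨b, hb⟩ := by
    intro x hx
    obtain ⟨p0⟩ := hconn x w
    obtain ⟨q, hq⟩ : ∃ q : G.Walk w x, q.IsPath := ⟨(p0.toPath).1.reverse, (p0.toPath).2.reverse⟩
    cases q with
    | nil => exact absurd rfl hx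
    | @cons _ u _ h q' =>
      rw [SimpleGraph.Walk.cons_isPath_iff] at hq
      have hu : u ≠ w := h.ne'
      have hr : G'.Reachable ⟨x, hx⟩ ⟨u, hu⟩ := by
        apply walk_to_subtype q'.reverse hx hu
        rw [SimpleGraph.Walk.support_reverse]
        intro hm
        exact hq.2 (List.mem_reverse.mp hm)
      rcases w_nbr u h with rfl | rfl
      · exact Or.inl hr
      · exact Or.inr hr
  have b_reach : G'.Reachable ⟨b, hb⟩ ⟨a, ha⟩ := by
    by_contra hnr
    set R : Finset {x : V // x ≠ w} :=
      Finset.univ.filter (fun x => G'.Reachable ⟨a, ha⟩ x) with hR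
    have haR : ⟨a, ha⟩ ∈ R := by
      simp only [hR, Finset.mem_filter]
      exact ⟨Finset.mem_univ _, Reachable.refl _⟩
    obtain ⟨z, hzR, hzmax⟩ := R.exists_max_image (fun x => G'.dist ⟨a, ha⟩ x) ⟨_, haR⟩
    have hzr : G'.Reachable ⟨a, ha⟩ z := by
      simp only [hR, Finset.mem_filter] at hzR
      exact hzR.2
    rcases hDz : G'.dist ⟨a, ha⟩ z with _ | d
    · have hza : (⟨a, ha⟩ : {x : V // x ≠ w}) = z := hzr.dist_eq_zero_iff.mp hDz
      obtain ⟨p, q, hpq, hp, hq⟩ := h2 a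
      obtain ⟨c, hc, hac⟩ : ∃ c, c ≠ w ∧ G.Adj a c := by
        by_cases hpw : p = w
        · have hqw : q ≠ w := by rintro rfl; exact hpq hpw
          exact ⟨q, hqw, hq⟩
        · exact ⟨p, hpw, hp⟩
      have hadjc : G'.Adj ⟨a, ha⟩ ⟨c, hc⟩ := hac
      have hcR : ⟨c, hc⟩ ∈ R := by
        simp only [hR, Finset.mem_filter]
        exact ⟨Finset.mem_univ _, hadjc.reachable⟩
      have hle := hzmax _ hcR
      rw [hDz] at hle
      have h0 : G'.dist ⟨a, ha⟩ ⟨c, hc⟩ = 0 := by omega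
      have := hadjc.reachable.dist_eq_zero_iff.mp h0
      exact hac.ne (congrArg Subtype.val this)
    · have hza : z ≠ ⟨a, ha⟩ := by
        rintro rfl
        rw [SimpleGraph.dist_self] at hDz
        omega
      have hzb : z ≠ ⟨b, hb⟩ := by
        rintro rfl
        exact hnr hzr.symm
      obtain ⟨p, q, hpq, hp, hq⟩ := h2 z.1
      have hpw : p ≠ w := by
        rintro rfl
        rcases w_nbr z.1 hp.symm with h' | h'
        · exact hza (Subtype.ext h')
        · exact hzb (Subtype.ext h')
      have hqw : q ≠ w := by
        rintro rfl
        rcases w_nbr z.1 hq.symm with h' | h'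
        · exact hza (Subtype.ext h')
        · exact hzb (Subtype.ext h')
      have hpadj : G'.Adj z ⟨p, hpw⟩ := hp
      have hqadj : G'.Adj z ⟨q, hqw⟩ := hq
      have key : ∀ (c : V) (hc : c ≠ w), G'.Adj z ⟨c, hc⟩ → G'.dist ⟨a, ha⟩ ⟨c, hc⟩ = d := by
        intro c hc hcadj
        have hcR : ⟨c, hc⟩ ∈ R := by
          simp only [hR, Finset.mem_filter]
          exact ⟨Finset.mem_univ _, hzr.trans hcadj.reachable⟩
        have hle := hzmax _ hcR
        rw [hDz] at hle
        have hge : G'.dist ⟨a, ha⟩ z ≤ G'.dist ⟨a, ha⟩ ⟨c, hc⟩ + 1 := by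
          have htr := rdist_triangle (hzr.trans hcadj.reachable) hcadj.symm.reachable
          have hd1 : G'.dist ⟨c, hc⟩ z ≤ 1 := by
            have := dist_le hcadj.symm.toWalk
            simpa using this
          omega
        rw [hDz] at hge
        have hne : G'.dist ⟨a, ha⟩ ⟨c, hc⟩ ≠ d + 1 := by
          intro heq
          have := sphere_unique hdeg' (h1' a hwa ha) (d+1) ⟨c, hc⟩ z
            (hzr.trans hcadj.reachable) hzr heq hDz
          rw [this] at hcadj
          exact hcadj.ne rfl
        omega
      have hdp := key p hpw hpadj
      have hdq := key q hqw hqadj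
      have := sphere_unique hdeg' (h1' a hwa ha) d ⟨p, hpw⟩ ⟨q, hqw⟩
        (hzr.trans hpadj.reachable) (hzr.trans hqadj.reachable) hdp hdq
      exact hpq (congrArg Subtype.val this)
  have hconn' : G'.Connected := by
    have hpre : G'.Preconnected := by
      intro x y
      have rx : G'.Reachable x ⟨a, ha⟩ :=
        (reach_ab x.1 x.2).elim id (fun h => h.trans b_reach)
      have ry : G'.Reachable y ⟨a, ha⟩ :=
        (reach_ab y.1 y.2).elim id (fun h => h.trans b_reach)
      exact rx.trans ry.symm
    haveI : Nonempty {x : V // x ≠ w} := ⟨⟨a, ha⟩⟩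
    exact ⟨hpre⟩
  obtain ⟨hlt, hinj, hsurj, hadjiff⟩ := path_mach hconn' hdeg' ⟨a, ha⟩ (h1' a hwa ha)
  set N : ℕ := Fintype.card {x : V // x ≠ w} with hN
  have hN2 : 2 ≤ N := by
    rw [hN]
    have : Nontrivial {x : V // x ≠ w} :=
      ⟨⟨a, ha⟩, ⟨b, hb⟩, fun h => hab (congrArg Subtype.val h)⟩
    exact Fintype.one_lt_card
  have hDa : G'.dist ⟨a, ha⟩ ⟨a, ha⟩ = 0 := SimpleGraph.dist_self
  have htb : G'.dist ⟨a, ha⟩ ⟨b, hb⟩ = N - 1 := by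
    by_contra hne
    have hblt := hlt ⟨b, hb⟩
    have htne : G'.dist ⟨a, ha⟩ ⟨b, hb⟩ ≠ 0 := by
      intro h0
      exact hab (congrArg Subtype.val (b_reach.symm.dist_eq_zero_iff.mp h0))
    obtain ⟨x, hx⟩ := hsurj (G'.dist ⟨a, ha⟩ ⟨b, hb⟩ - 1) (by omega)
    obtain ⟨y, hy⟩ := hsurj (G'.dist ⟨a, ha⟩ ⟨b, hb⟩ + 1) (by omega)
    have hax : G'.Adj ⟨b, hb⟩ x := by
      rw [hadjiff, hx]
      simp only [Nat.dist, Fin.val_mk]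
      omega
    have hay : G'.Adj ⟨b, hb⟩ y := by
      rw [hadjiff, hy]
      simp only [Nat.dist, Fin.val_mk]
      omega
    have := h1' b hwb hb x y hax hay
    rw [this, hy] at hx
    omega
  -- build the equivalence
  have hcy : 3 ≤ N + 1 := by omega
  set E : V → Fin (N + 1) := fun x =>
    if hx : x = w then ⟨N, by omega⟩
    else ⟨G'.dist ⟨a, ha⟩ ⟨x, hx⟩, by have := hlt ⟨x, hx⟩; omega⟩ with hE
  have hEw : E w = ⟨N, by omega⟩ := by simp [hE]
  have hEx : ∀ (x : V) (hx : x ≠ w), E x = ⟨G'.dist ⟨a, ha⟩ ⟨x, hx⟩, by have := hlt ⟨x, hx⟩; omega⟩ := by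
    intro x hx
    simp [hE, hx]
  have hEinj : Function.Injective E := by
    intro x y h
    by_cases hx : x = w <;> by_cases hy : y = w
    · rw [hx, hy]
    · rw [hx, hEw, hEx y hy, Fin.ext_iff] at h
      have := hlt ⟨y, hy⟩
      simp at h
      omega
    · rw [hy, hEw, hEx x hx, Fin.ext_iff] at h
      have := hlt ⟨x, hx⟩
      simp at h
      omega
    · rw [hEx x hx, hEx y hy, Fin.ext_iff] at h
      simp at h
      exact congrArg Subtype.val (hinj ⟨x, hx⟩ ⟨y, hy⟩ h)
  have hEsurj : Function.Surjective E := by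
    rintro ⟨k, hk⟩
    by_cases hkN : k = N
    · exact ⟨w, by rw [hEw]; exact Fin.ext hkN.symm⟩
    · obtain ⟨x, hx⟩ := hsurj k (by omega)
      exact ⟨x.1, by rw [hEx x.1 x.2]; exact Fin.ext hx⟩
  have cycAdj : ∀ (s t : Fin (N + 1)), (cycleGraph (N + 1)).Adj s t ↔
      (Nat.dist s.val t.val = 1 ∨ (s.val = 0 ∧ t.val = N) ∨ (t.val = 0 ∧ s.val = N)) := by
    intro s t
    rw [cycleGraph_adj']
    have e1 : (s - t).val = ((N + 1) - t.val + s.val) % (N + 1) := by rw [Fin.sub_def]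
    have e2 : (t - s).val = ((N + 1) - s.val + t.val) % (N + 1) := by rw [Fin.sub_def]
    have hs := s.2; have ht := t.2
    have m1 := mod2 (a := (N + 1) - t.val + s.val) (n := N + 1) (by omega)
    have m2 := mod2 (a := (N + 1) - s.val + t.val) (n := N + 1) (by omega)
    rw [e1, e2]
    simp only [Nat.dist, Fin.val_mk]
    omega
  refine ⟨N + 1, hcy, ⟨⟨Equiv.ofBijective E ⟨hEinj, hEsurj⟩, ?_⟩⟩⟩
  intro x y
  show (cycleGraph (N + 1)).Adj (E x) (E y) ↔ G.Adj x y
  rw [cycAdj]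
  have hvw : (E w).val = N := by rw [hEw]
  by_cases hx : x = w <;> by_cases hy : y = w
  · subst hx; subst hy
    simp only [Nat.dist]
    constructor
    · intro h; omega
    · intro h; exact absurd rfl h.ne
  · subst hx
    have hvy : (E y).val = G'.dist ⟨a, ha⟩ ⟨y, hy⟩ := by rw [hEx y hy]
    have hylt := hlt ⟨y, hy⟩
    have hyb : (y = b) ↔ G'.dist ⟨a, ha⟩ ⟨y, hy⟩ = N - 1 := by
      constructor
      · intro h; subst h; rw [← htb]
      · intro h
        exact congrArg Subtype.val (hinj ⟨y, hy⟩ ⟨b, hb⟩ (by rw [h, htb]))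
    have hya : (y = a) ↔ G'.dist ⟨a, ha⟩ ⟨y, hy⟩ = 0 := by
      constructor
      · intro h; subst h; exact SimpleGraph.dist_self
      · intro h
        exact congrArg Subtype.val (hinj ⟨y, hy⟩ ⟨a, ha⟩ (by rw [h, hDa]))
    simp only [Nat.dist]
    constructor
    · intro h
      have hcase : G'.dist ⟨a, ha⟩ ⟨y, hy⟩ = N - 1 ∨ G'.dist ⟨a, ha⟩ ⟨y, hy⟩ = 0 := by omega
      rcases hcase with h' | h'
      · rw [← hyb] at h'; subst h'; exact hwb
      · rw [← hya] at h'; subst h'; exact hwa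
    · intro h
      rcases w_nbr y h with h' | h'
      · rw [hya] at h'; omega
      · rw [hyb] at h'; omega
  · subst hy
    have hvx : (E x).val = G'.dist ⟨a, ha⟩ ⟨x, hx⟩ := by rw [hEx x hx]
    have hxlt := hlt ⟨x, hx⟩
    have hxb : (x = b) ↔ G'.dist ⟨a, ha⟩ ⟨x, hx⟩ = N - 1 := by
      constructor
      · intro h; subst h; rw [← htb]
      · intro h
        exact congrArg Subtype.val (hinj ⟨x, hx⟩ ⟨b, hb⟩ (by rw [h, htb]))
    have hxa : (x = a) ↔ G'.dist ⟨a, ha⟩ ⟨x, hx⟩ = 0 := by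
      constructor
      · intro h; subst h; exact SimpleGraph.dist_self
      · intro h
        exact congrArg Subtype.val (hinj ⟨x, hx⟩ ⟨a, ha⟩ (by rw [h, hDa]))
    simp only [Nat.dist]
    constructor
    · intro h
      have hcase : G'.dist ⟨a, ha⟩ ⟨x, hx⟩ = N - 1 ∨ G'.dist ⟨a, ha⟩ ⟨x, hx⟩ = 0 := by omega
      rcases hcase with h' | h'
      · rw [← hxb] at h'; subst h'; exact hwb.symm
      · rw [← hxa] at h'; subst h'; exact hwa.symm
    · intro h
      rcases w_nbr x h.symm with h' | h'
      · rw [hxa] at h'; omega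
      · rw [hxb] at h'; omega
  · have hvx : (E x).val = G'.dist ⟨a, ha⟩ ⟨x, hx⟩ := by rw [hEx x hx]
    have hvy : (E y).val = G'.dist ⟨a, ha⟩ ⟨y, hy⟩ := by rw [hEx y hy]
    have hG'xy : (G.Adj x y) ↔ G'.Adj ⟨x, hx⟩ ⟨y, hy⟩ := Iff.rfl
    rw [hG'xy, hadjiff ⟨x, hx⟩ ⟨y, hy⟩]
    have h1 := hlt ⟨x, hx⟩
    have h2 := hlt ⟨y, hy⟩
    simp only [Nat.dist]
    omega



theorem path_mach_iso [Fintype V] (hconn : G.Connected)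
    (hdeg : ∀ v a b c : V, G.Adj v a → G.Adj v b → G.Adj v c → a = b ∨ a = c ∨ b = c)
    (v0 : V) (h1 : ∀ a b : V, G.Adj v0 a → G.Adj v0 b → a = b) : IsPathGraph G := by
  obtain ⟨hlt, hinj, hsurj, hadj⟩ := path_mach hconn hdeg v0 h1
  haveI := hconn.nonempty
  refine ⟨Fintype.card V, Fintype.card_pos, ⟨⟨Equiv.ofBijective
    (fun x => (⟨G.dist v0 x, hlt x⟩ : Fin (Fintype.card V))) ⟨?_, ?_⟩, ?_⟩⟩⟩
  · intro x y h
    exact hinj x y (by simpa [Fin.ext_iff] using h)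
  · rintro ⟨k, hk⟩
    obtain ⟨x, hx⟩ := hsurj k hk
    exact ⟨x, Fin.ext hx⟩
  · intro x y
    show (pathGraph _).Adj ⟨G.dist v0 x, hlt x⟩ ⟨G.dist v0 y, hlt y⟩ ↔ G.Adj x y
    rw [pathGraph_adj, hadj x y]
    simp only [Nat.dist, Fin.val_mk]
    omega

end Aux

/-- A connected graph has all its `2r/2`-balls being paths iff it is a path
or a cycle of length greater than `2r`. -/
theorem stmt_0 {V : Type*} [Fintype V] (G : SimpleGraph V) (hconn : G.Connected)
    (r : ℕ) (hr : 1 ≤ r) :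
    (∀ v : V, IsPathGraph (_root_.ball G v (2 * r)).coe) ↔
      (IsPathGraph G ∨ ∃ n : ℕ, 2 * r < n ∧ Nonempty (G ≃g cycleGraph n)) := by
  have hdiv : 2 * r / 2 = r := by omega
  constructor
  · intro h
    have hdeg : ∀ v a b c : V, G.Adj v a → G.Adj v b → G.Adj v c → a = b ∨ a = c ∨ b = c := by
      intro v a b c hva hvb hvc
      by_contra hcon
      push_neg at hcon
      obtain ⟨hab, hac, hbc⟩ := hcon
      obtain ⟨m, hm, ⟨f⟩⟩ := h v
      have hvmem : v ∈ (_root_.ball G v (2*r)).verts :=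
        ⟨Reachable.refl v, by rw [SimpleGraph.dist_self]; omega⟩
      have hmem : ∀ z, G.Adj v z → z ∈ (_root_.ball G v (2*r)).verts := by
        intro z hz
        exact ⟨hz.reachable, by rw [dist_eq_one_iff_adj.mpr hz]; omega⟩
      have badj : ∀ z (hz : G.Adj v z), (_root_.ball G v (2*r)).Adj v z := by
        intro z hz
        refine ⟨hz, hvmem, hmem z hz, ?_⟩
        rw [SimpleGraph.dist_self, dist_eq_one_iff_adj.mpr hz]
        omega
      have ca : (_root_.ball G v (2*r)).coe.Adj ⟨v, hvmem⟩ ⟨a, hmem a hva⟩ := badj a hva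
      have cb : (_root_.ball G v (2*r)).coe.Adj ⟨v, hvmem⟩ ⟨b, hmem b hvb⟩ := badj b hvb
      have cc : (_root_.ball G v (2*r)).coe.Adj ⟨v, hvmem⟩ ⟨c, hmem c hvc⟩ := badj c hvc
      have h3 := pathGraph_no3 (f ⟨v, hvmem⟩) (f ⟨a, hmem a hva⟩) (f ⟨b, hmem b hvb⟩)
        (f ⟨c, hmem c hvc⟩) (f.map_adj_iff.mpr ca) (f.map_adj_iff.mpr cb) (f.map_adj_iff.mpr cc)
      rcases h3 with h' | h' | h'
      · exact hab (congrArg Subtype.val (f.injective h'))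
      · exact hac (congrArg Subtype.val (f.injective h'))
      · exact hbc (congrArg Subtype.val (f.injective h'))
    by_cases hex : ∃ v0, ∀ a b : V, G.Adj v0 a → G.Adj v0 b → a = b
    · obtain ⟨v0, h1⟩ := hex
      exact Or.inl (path_mach_iso hconn hdeg v0 h1)
    · push_neg at hex
      obtain ⟨n, hn3, ⟨f⟩⟩ := cycle_mach hconn hdeg (by
        intro v
        obtain ⟨a, b, hva, hvb, hab⟩ := hex v
        exact ⟨a, b, hab, hva, hvb⟩)
      right
      refine ⟨n, ?_, ⟨f⟩⟩
      by_contra hle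
      push_neg at hle
      haveI := hconn.nonempty
      set v := Classical.arbitrary V with hv
      have hP : IsPathGraph (_root_.ball (cycleGraph n) (f v) (2*r)).coe :=
        isPathGraph_of_iso (ballIso f v (2*r)).symm (h v)
      obtain ⟨e⟩ := cycle_ball_full hn3 hr hle (f v)
      exact not_isPathGraph_cycleGraph hn3 (isPathGraph_of_iso e.symm hP)
  · intro h v
    rcases h with ⟨n, hn, ⟨f⟩⟩ | ⟨n, hn, ⟨f⟩⟩
    · exact isPathGraph_of_iso (ballIso f v (2*r)) (pathGraph_ball_isPath hr (f v))
    · exact isPathGraph_of_iso (ballIso f v (2*r)) (cycle_ball_isPath hr hn (f v))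
end

section
/- Let G be a finite graph. Then G is 3-locally interval if and only if G is wheel-free and contains no induced subgraph consisting of a chordal non-interval graph F together with one additional vertex adjacent to every vertex of F. -/
open SimpleGraph

section Aux
open SimpleGraph

lemma IsIntervalGraph.of_iso {V W : Type*} {G : SimpleGraph V} {H : SimpleGraph W}
    (e : G ≃g H) (h : IsIntervalGraph G) : IsIntervalGraph H := by
  obtain ⟨I, hI, hadj⟩ := h
  refine ⟨fun w => I (e.symm w), fun w => hI _, fun u v huv => ?_⟩
  rw [← e.symm.map_adj_iff]
  exact hadj _ _ (fun hh => huv (e.symm.injective hh))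

lemma interval_induce_subset {V : Type*} (G : SimpleGraph V) {s t : Set V} (hts : t ⊆ s)
    (h : IsIntervalGraph (G.induce s)) : IsIntervalGraph (G.induce t) := by
  obtain ⟨I, hI, hadj⟩ := h
  refine ⟨fun x => I ⟨x.1, hts x.2⟩, fun x => hI _, fun u v huv => ?_⟩
  have hne : (⟨u.1, hts u.2⟩ : s) ≠ ⟨v.1, hts v.2⟩ := by
    intro hh; apply huv; apply Subtype.ext; injection hh
  have := hadj _ _ hne
  simpa [comap_adj] using this

def isoInduce {V W : Type*} {G : SimpleGraph V} {H : SimpleGraph W} (e : G ≃g H) (u : Set W) :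
    G.induce (⇑e ⁻¹' u) ≃g H.induce u where
  toEquiv := e.toEquiv.subtypeEquiv (fun _ => Iff.rfl)
  map_rel_iff' := by
    intro a b
    simp [comap_adj, Equiv.subtypeEquiv, e.map_adj_iff]

noncomputable def induceInduceIso {V : Type*} (G : SimpleGraph V) (s : Set V) (t : Set ↥s) :
    (G.induce s).induce t ≃g G.induce (Subtype.val '' t) where
  toEquiv := Equiv.Set.image Subtype.val t Subtype.val_injective
  map_rel_iff' := by
    intro a b
    exact Iff.rfl

open Fin.CommRing in
lemma cycle_not_interval {n : ℕ} (hn : 4 ≤ n) : ¬ IsIntervalGraph (cycleGraph n) := by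
  obtain ⟨m, rfl⟩ : ∃ m, n = m + 4 := ⟨n - 4, by omega⟩
  rintro ⟨I, hI, hadj⟩
  choose a b hab hIcc using hI
  obtain ⟨k, -, hk⟩ := Finset.exists_max_image Finset.univ a ⟨0, Finset.mem_univ 0⟩
  have h2 : ((2 : Fin (m+4)) : ℕ) = 2 := by simp
  have h1 : ((1 : Fin (m+4)) : ℕ) = 1 := by simp
  have adj1 : (cycleGraph (m+4)).Adj k (k-1) := by
    rw [cycleGraph_adj']
    left
    rw [sub_sub_cancel, h1]
  have adj2 : (cycleGraph (m+4)).Adj k (k+1) := by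
    rw [cycleGraph_adj']
    right
    rw [add_sub_cancel_left, h1]
  have hne : (k - 1) ≠ (k + 1) := by
    intro h
    have : (k+1) - (k-1) = 0 := by rw [← h]; ring
    have h2' : (2 : Fin (m+4)) = 0 := by rw [← this]; ring
    have := congrArg Fin.val h2'
    rw [h2] at this; simp at this
  have hnadj : ¬ (cycleGraph (m+4)).Adj (k-1) (k+1) := by
    rw [cycleGraph_adj']
    push_neg
    constructor
    · intro h
      have e : (k-1) - (k+1) = -2 := by ring
      have e2 : ((-2 : Fin (m+4)) : ℕ) = 1 := by rw [← e]; exact h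
      have e3 : ((-2 : Fin (m+4)) : ℕ) = m+2 := by simp [Fin.coe_neg, Nat.mod_eq_of_lt (show 2 < m+4 by omega)]
      omega
    · intro h
      have e : (k+1) - (k-1) = 2 := by ring
      rw [e, h2] at h
      omega
  have key : ∀ x : Fin (m+4), (cycleGraph (m+4)).Adj k x → a k ∈ I x := by
    intro x hx
    obtain ⟨y, hyk, hyx⟩ := (hadj k x hx.ne).mp hx
    rw [hIcc] at hyx hyk ⊢
    exact ⟨hk x (Finset.mem_univ x), le_trans hyk.1 hyx.2⟩
  have hint : (I (k-1) ∩ I (k+1)).Nonempty := ⟨a k, key _ adj1, key _ adj2⟩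
  exact hnadj ((hadj _ _ hne).mpr hint)

lemma cone_interval {V : Type*} [Fintype V] {G : SimpleGraph V} {s : Set V} {v : V}
    (hadjall : ∀ u ∈ s, G.Adj v u)
    (h : IsIntervalGraph (G.induce s)) : IsIntervalGraph (G.induce (insert v s)) := by
  classical
  haveI : Fintype ↥s := Set.Finite.fintype (Set.toFinite s)
  obtain ⟨I, hI, hadj⟩ := h
  choose a b hab hIcc using hI
  set TL : Finset ℝ := insert 0 (Finset.univ.image (fun u : s => a u)) with hTL
  set TR : Finset ℝ := insert 0 (Finset.univ.image (fun u : s => b u)) with hTR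
  have hTLne : TL.Nonempty := ⟨0, Finset.mem_insert_self _ _⟩
  have hTRne : TR.Nonempty := ⟨0, Finset.mem_insert_self _ _⟩
  set c : ℝ := TL.min' hTLne with hc
  set d : ℝ := TR.max' hTRne with hd
  have hcd : c ≤ d := le_trans (Finset.min'_le _ _ (Finset.mem_insert_self _ _))
    (Finset.le_max' _ _ (Finset.mem_insert_self _ _))
  have hca : ∀ u : s, c ≤ a u := fun u => Finset.min'_le _ _
    (Finset.mem_insert_of_mem (Finset.mem_image_of_mem _ (Finset.mem_univ u)))
  have hbd : ∀ u : s, b u ≤ d := fun u => Finset.le_max' _ _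
    (Finset.mem_insert_of_mem (Finset.mem_image_of_mem _ (Finset.mem_univ u)))
  refine ⟨fun x => if h : (x : V) ∈ s then I ⟨x, h⟩ else Set.Icc c d, fun x => ?_, ?_⟩
  · by_cases h : (x : V) ∈ s
    · simp only [h, dif_pos]; exact ⟨a ⟨x, h⟩, b ⟨x, h⟩, hab _, hIcc _⟩
    · simp only [h, dif_neg, not_false_iff]; exact ⟨c, d, hcd, rfl⟩
  · intro u w huw
    have huw' : (u : V) ≠ (w : V) := fun hh => huw (Subtype.ext hh)
    have hmem : ∀ x : ↥(insert v s), (x : V) ∉ s → (x : V) = v := by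
      intro x hx
      rcases x.2 with h | h
      · exact h
      · exact absurd h hx
    have hIcc_sub : ∀ (x1 x2 : ↥(insert v s)) (h1 : (x1 : V) ∈ s), (x2:V) ∉ s →
        (dite ((x1:V) ∈ s) (fun h => I ⟨x1, h⟩) (fun _ => Set.Icc c d) ∩
          dite ((x2:V) ∈ s) (fun h => I ⟨x2, h⟩) (fun _ => Set.Icc c d)).Nonempty := by
      intro x1 x2 h1 h2
      refine ⟨a ⟨x1, h1⟩, ?_, ?_⟩
      · simp only [h1, dif_pos]; rw [hIcc]; exact ⟨le_refl _, hab _⟩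
      · simp only [h2, dif_neg, not_false_iff]
        exact ⟨hca _, le_trans (hab _) (hbd _)⟩
    by_cases hu : (u : V) ∈ s <;> by_cases hw : (w : V) ∈ s
    · have hne : (⟨(u:V), hu⟩ : s) ≠ ⟨(w:V), hw⟩ := fun hh => huw' (by injection hh)
      have := hadj _ _ hne
      simp only [comap_adj, Function.Embedding.coe_subtype] at this ⊢
      simp only [hu, hw, dif_pos]
      exact this
    · have hwv := hmem w hw
      simp only [comap_adj, Function.Embedding.coe_subtype]
      constructor
      · intro _; exact hIcc_sub u w hu hw
      · intro _; rw [hwv]; exact (hadjall _ hu).symm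
    · have huv := hmem u hu
      simp only [comap_adj, Function.Embedding.coe_subtype]
      constructor
      · intro _
        obtain ⟨y, hy1, hy2⟩ := hIcc_sub w u hw hu
        exact ⟨y, hy2, hy1⟩
      · intro _; rw [huv]; exact hadjall _ hw
    · exact absurd ((hmem u hu).trans (hmem w hw).symm) huw'

lemma ball_verts_eq {V : Type*} (G : SimpleGraph V) (v : V) :
    (_root_.ball G v 3).verts = insert v (G.neighborSet v) := by
  ext x
  simp only [_root_.ball, Set.mem_setOf_eq, Set.mem_insert_iff, mem_neighborSet]
  constructor
  · rintro ⟨hr, hd⟩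
    have h32 : (3 : ℕ) / 2 = 1 := rfl
    rw [h32] at hd
    rcases Nat.eq_or_lt_of_le hd with h | h
    · exact Or.inr (SimpleGraph.dist_eq_one_iff_adj.mp h.symm.symm)
    · have : G.dist v x = 0 := by omega
      exact Or.inl ((hr.dist_eq_zero_iff.mp this).symm)
  · rintro (rfl | h)
    · exact ⟨Reachable.refl _, by simp [SimpleGraph.dist_self]⟩
    · exact ⟨h.reachable, by rw [show (3:ℕ)/2 = 1 from rfl]; exact (dist_eq_one_iff_adj.mpr h).le⟩

lemma ball_three_interval_iff {V : Type*} (G : SimpleGraph V) (v : V) :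
    IsIntervalGraph (_root_.ball G v 3).coe ↔
      IsIntervalGraph (G.induce (insert v (G.neighborSet v))) := by
  have hset := ball_verts_eq G v
  have hdist : ∀ x : V, x ∈ (_root_.ball G v 3).verts → G.Reachable v x ∧ G.dist v x ≤ 1 := by
    intro x hx
    exact hx
  have key : ∀ (x y : ↥(_root_.ball G v 3).verts),
      (_root_.ball G v 3).coe.Adj x y ↔ G.Adj x.1 y.1 := by
    intro x y
    constructor
    · exact fun h => h.1
    · intro h
      obtain ⟨hrx, hdx⟩ := hdist _ x.2
      obtain ⟨hry, hdy⟩ := hdist _ y.2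
      exact ⟨h, ⟨hrx, hdx⟩, ⟨hry, hdy⟩, by omega⟩
  constructor
  · intro h
    refine IsIntervalGraph.of_iso ?_ h
    exact ⟨Equiv.setCongr hset, by
      intro a b
      simp only [comap_adj, Function.Embedding.coe_subtype, Equiv.setCongr, Equiv.coe_fn_mk]
      exact (key a b).symm⟩
  · intro h
    refine IsIntervalGraph.of_iso ?_ h
    exact ⟨(Equiv.setCongr hset).symm, by
      intro a b
      rw [key]
      rfl⟩

lemma wheel_adj_none {n : ℕ} (i : Fin n) : (wheel n).Adj none (some i) := by
  rw [wheel, SimpleGraph.fromRel_adj]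
  exact ⟨by simp, Or.inl (Or.inl rfl)⟩

lemma wheel_adj_some {n : ℕ} {i j : Fin n} :
    (wheel n).Adj (some i) (some j) ↔ (cycleGraph n).Adj i j := by
  rw [wheel, SimpleGraph.fromRel_adj]
  constructor
  · rintro ⟨hne, (h | ⟨a, c, ha, hc, hac⟩) | (h | ⟨a, c, ha, hc, hac⟩)⟩
    · exact absurd h (by simp)
    · cases Option.some.inj ha; cases Option.some.inj hc; exact hac
    · exact absurd h (by simp)
    · cases Option.some.inj ha; cases Option.some.inj hc; exact hac.symm
  · intro h
    exact ⟨by simpa using h.ne, Or.inl (Or.inr ⟨i, j, rfl, rfl, h⟩)⟩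

noncomputable def wheelSubIso (n : ℕ) :
    ((wheel n).induce {x : Option (Fin n) | x ≠ none}) ≃g cycleGraph n where
  toEquiv :=
    { toFun := fun x => x.1.get (Option.ne_none_iff_isSome.mp x.2)
      invFun := fun i => ⟨some i, Option.some_ne_none i⟩
      left_inv := fun x => Subtype.ext (Option.some_get _)
      right_inv := fun i => rfl }
  map_rel_iff' := by
    intro x y
    simp only [comap_adj, Function.Embedding.coe_subtype, Equiv.coe_fn_mk]
    rw [← wheel_adj_some, Option.some_get, Option.some_get]

noncomputable def wheelConeIso {V : Type*} {G : SimpleGraph V} {n : ℕ} {t : Set V} {v : V}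
    (hvt : v ∉ t) (hadjall : ∀ u ∈ t, G.Adj v u) (e : G.induce t ≃g cycleGraph n) :
    G.induce (insert v t) ≃g wheel n := by
  classical
  have hmem : ∀ x : ↥(insert v t), (x : V) ∉ t → (x : V) = v := by
    intro x hx
    rcases x.2 with h | h
    · exact h
    · exact absurd h hx
  refine ⟨⟨fun x => if h : (x : V) ∈ t then some (e ⟨x, h⟩) else none,
      fun o => Option.rec ⟨v, Set.mem_insert _ _⟩
        (fun i => ⟨(e.symm i).1, Set.mem_insert_of_mem _ (e.symm i).2⟩) o, ?_, ?_⟩, ?_⟩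
  · intro x
    by_cases h : (x : V) ∈ t
    · simp only [h, dif_pos]
      apply Subtype.ext
      show ((e.symm (e ⟨x, h⟩)) : V) = x
      rw [e.symm_apply_apply]
    · simp only [h, dif_neg, not_false_iff]
      exact Subtype.ext (hmem x h).symm
  · intro o
    cases o with
    | none => simp only [dif_neg hvt]
    | some i =>
      have h : ((e.symm i : ↥t) : V) ∈ t := (e.symm i).2
      simp only [h, dif_pos]
      congr 1
      have : (⟨((e.symm i : ↥t) : V), h⟩ : ↥t) = e.symm i := Subtype.ext rfl
      rw [this, e.apply_symm_apply]
  · intro x y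
    simp only [Equiv.coe_fn_mk, comap_adj, Function.Embedding.coe_subtype]
    by_cases hx : (x : V) ∈ t <;> by_cases hy : (y : V) ∈ t
    · simp only [hx, hy, dif_pos]
      rw [wheel_adj_some]
      exact e.map_adj_iff
    · simp only [hx, hy, dif_pos, dif_neg, not_false_iff]
      have hyv := hmem y hy
      constructor
      · intro _; rw [hyv]; exact (hadjall _ hx).symm
      · intro _; exact ((wheel_adj_none (e ⟨x, hx⟩)).symm)
    · simp only [hx, hy, dif_pos, dif_neg, not_false_iff]
      have hxv := hmem x hx
      constructor
      · intro _; rw [hxv]; exact hadjall _ hy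
      · intro _; exact wheel_adj_none (e ⟨y, hy⟩)
    · have hxv := hmem x hx
      have hyv := hmem y hy
      simp only [hx, hy, dif_neg, not_false_iff]
      constructor
      · intro h; exact absurd h ((wheel n).loopless.irrefl _)
      · intro h; rw [hxv, hyv] at h; exact absurd h (G.loopless.irrefl _)

end Aux

/-- A finite graph is 3-locally interval iff it is wheel-free and contains no
induced subgraph consisting of a chordal non-interval graph together with one additional vertex
adjacent to all of its vertices. -/
theorem stmt_9 {V : Type*} [Fintype V] (G : SimpleGraph V) :
    LocallyInterval G 3 ↔
      (WheelFree G ∧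
        ¬ ∃ (s : Set V) (v : V), v ∉ s ∧ (∀ u ∈ s, G.Adj v u) ∧
          IsChordal (G.induce s) ∧ ¬ IsIntervalGraph (G.induce s)) := by
  constructor
  · intro hloc
    have hball : ∀ w : V, IsIntervalGraph (G.induce (insert w (G.neighborSet w))) :=
      fun w => (ball_three_interval_iff G w).mp (hloc w)
    constructor
    · rintro n hn ⟨s, ⟨e⟩⟩
      set hub : V := (e.symm none).1 with hhub
      set u : Set (Option (Fin n)) := {x | x ≠ none} with hu
      set p : Set ↥s := ⇑e ⁻¹' u with hp
      have iso1 : G.induce (Subtype.val '' p) ≃g cycleGraph n :=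
        ((induceInduceIso G s p).symm.trans ((isoInduce e u).trans (wheelSubIso n)))
      have hsub : Subtype.val '' p ⊆ insert hub (G.neighborSet hub) := by
        rintro x ⟨z, hz, rfl⟩
        right
        have hzn : e z ≠ none := hz
        obtain ⟨i, hi⟩ := Option.ne_none_iff_exists'.mp hzn
        have hadj : (wheel n).Adj (e (e.symm none)) (e z) := by
          rw [e.apply_symm_apply, hi]
          exact wheel_adj_none i
        have := e.map_adj_iff.mp hadj
        exact this
      have : IsIntervalGraph (G.induce (Subtype.val '' p)) :=
        interval_induce_subset G hsub (hball hub)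
      exact cycle_not_interval hn (IsIntervalGraph.of_iso iso1 this)
    · rintro ⟨s, v, hvs, hadjall, hchord, hnint⟩
      have hsub : s ⊆ insert v (G.neighborSet v) := by
        intro u hu
        exact Set.mem_insert_of_mem _ (hadjall u hu)
      exact hnint (interval_induce_subset G hsub (hball v))
  · rintro ⟨hwf, hnc⟩ v
    rw [ball_three_interval_iff]
    set s : Set V := G.neighborSet v with hs
    have hvs : v ∉ s := fun h => G.loopless.irrefl _ h
    have hadjall : ∀ u ∈ s, G.Adj v u := fun u hu => hu
    have hchord : IsChordal (G.induce s) := by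
      rintro n hn ⟨t, ⟨e⟩⟩
      set t' : Set V := Subtype.val '' t with ht'
      have iso1 : G.induce t' ≃g cycleGraph n := (induceInduceIso G s t).symm.trans e
      have ht's : t' ⊆ s := by rintro x ⟨z, hz, rfl⟩; exact z.2
      have hvt' : v ∉ t' := fun h => hvs (ht's h)
      have hadjt' : ∀ u ∈ t', G.Adj v u := fun u hu => hadjall u (ht's hu)
      exact hwf n hn ⟨insert v t', ⟨wheelConeIso hvt' hadjt' iso1⟩⟩
    have hint : IsIntervalGraph (G.induce s) := by
      by_contra h
      exact hnc ⟨s, v, hvs, hadjall, hchord, h⟩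
    exact cone_interval hadjall hint
end

section
/- The long claw is 3-locally interval but is not a circular-arc graph. -/
open SimpleGraph

/-! ### Auxiliary lemmas -/

/-- Decidable adjacency test for `longClaw`. -/
def adjB (a b : Fin 7) : Bool :=
  decide ((a,b) ∈ [((0:Fin 7),(1:Fin 7)),(1,0),(0,2),(2,0),(0,3),(3,0),(1,4),(4,1),(2,5),(5,2),(3,6),(6,3)])

lemma longClaw_adj (a b : Fin 7) : longClaw.Adj a b ↔ adjB a b = true := by
  simp only [longClaw, SimpleGraph.fromEdgeSet_adj, Set.mem_insert_iff, Set.mem_singleton_iff]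
  revert a b
  decide

lemma fin_add_one_val {m : ℕ} (x : Fin (m+3)) (h : x + 1 ≠ 0) : (x + 1).val = x.val + 1 := by
  have h1 : (x + 1).val = (x.val + (1 : Fin (m+3)).val) % (m+3) := Fin.val_add x 1
  have h2 : (1 : Fin (m+3)).val = 1 := rfl
  have h3 : x.val < m + 3 := x.isLt
  rw [h2] at h1
  rcases Nat.lt_or_ge (x.val + 1) (m+3) with hlt | hge
  · rw [h1, Nat.mod_eq_of_lt hlt]
  · exfalso
    apply h
    apply Fin.ext
    rw [h1, show x.val + 1 = m + 3 by omega, Nat.mod_self]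
    rfl

lemma fin_add_one_eq_zero {m : ℕ} (x : Fin (m+3)) (h : x + 1 = 0) : x.val = m + 2 := by
  have h1 : (x + 1).val = (x.val + (1 : Fin (m+3)).val) % (m+3) := Fin.val_add x 1
  have h2 : (1 : Fin (m+3)).val = 1 := rfl
  have h3 : x.val < m + 3 := x.isLt
  rw [h, h2] at h1
  rcases Nat.lt_or_ge (x.val + 1) (m+3) with hlt | hge
  · rw [Nat.mod_eq_of_lt hlt] at h1
    have h0 : ((0 : Fin (m+3))).val = 0 := rfl
    omega
  · omega

lemma fin_step {m : ℕ} {t a b : Fin (m+3)} (hadj : (cycleGraph (m+3)).Adj a b)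
    (ha : a ≠ t) (hb : b ≠ t) :
    (b - t).val = (a - t).val + 1 ∨ (a - t).val = (b - t).val + 1 := by
  rw [cycleGraph_adj'] at hadj
  have key : ∀ u v : Fin (m+3), u ≠ t → v ≠ t → (v - u).val = 1 → (v - t).val = (u - t).val + 1 := by
    intro u v hu hv h1
    have hv1 : v = u + 1 := by
      have h2 : v - u = 1 := Fin.ext (by rw [h1]; rfl)
      rw [← h2]; exact (add_sub_cancel u v).symm
    subst hv1
    rw [add_sub_right_comm]
    apply fin_add_one_val
    rw [← add_sub_right_comm]
    exact sub_ne_zero.mpr hv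
  rcases hadj with h1 | h1
  · right; exact key b a hb ha h1
  · left; exact key a b ha hb h1

lemma fin_ivt {m : ℕ} (t : Fin (m+3)) :
    ∀ {x y : Fin (m+3)} (w : (cycleGraph (m+3)).Walk x y),
      (∀ z ∈ w.support, z ≠ t) → ∀ c : ℕ,
      (((x - t).val ≤ c ∧ c ≤ (y - t).val) ∨ ((y - t).val ≤ c ∧ c ≤ (x - t).val)) →
      ∃ z ∈ w.support, (z - t).val = c := by
  intro x y w
  induction w with
  | @nil u =>
    intro _ c hc
    exact ⟨u, by simp [Walk.support_nil], by omega⟩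
  | @cons u v y hadj p ih =>
    intro hsup c hc
    by_cases hcu : (u - t).val = c
    · exact ⟨u, by simp [Walk.support_cons], hcu⟩
    · have hu : u ≠ t := hsup u (Walk.start_mem_support _)
      have hv : v ≠ t := hsup v (by rw [Walk.support_cons]; exact List.mem_cons_of_mem _ (Walk.start_mem_support _))
      have hstep := fin_step hadj hu hv
      have hc' : (((v - t).val ≤ c ∧ c ≤ (y - t).val) ∨ ((y - t).val ≤ c ∧ c ≤ (v - t).val)) := by omega
      obtain ⟨z, hz, hzc⟩ := ih (fun z hz => hsup z (by rw [Walk.support_cons]; exact List.mem_cons_of_mem _ hz)) c hc'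
      exact ⟨z, by rw [Walk.support_cons]; exact List.mem_cons_of_mem _ hz, hzc⟩

lemma walk_cross {N : ℕ} (S T : Set (Fin N)) :
    ∀ {x y : Fin N} (w : (cycleGraph N).Walk x y),
      (∀ z ∈ w.support, z ∈ T) → x ∈ S → y ∉ S →
      ∃ a b, (cycleGraph N).Adj a b ∧ a ∈ T ∧ b ∈ T ∧ a ∈ S ∧ b ∉ S := by
  intro x y w
  induction w with
  | nil => intro _ hx hy; exact absurd hx hy
  | @cons u v y hadj p ih =>
    intro hsup hx hy
    by_cases hv : v ∈ S
    · exact ih (fun z hz => hsup z (by rw [Walk.support_cons]; exact List.mem_cons_of_mem _ hz)) hv hy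
    · exact ⟨u, v, hadj, hsup u (Walk.start_mem_support _),
        hsup v (by rw [Walk.support_cons]; exact List.mem_cons_of_mem _ (Walk.start_mem_support _)), hx, hv⟩

lemma subgraph_nonempty {V : Type*} {G : SimpleGraph V} {H : G.Subgraph}
    (h : IsPathGraph H.coe) : H.verts.Nonempty := by
  obtain ⟨k, hk, ⟨e⟩⟩ := h
  obtain ⟨k', rfl⟩ : ∃ k', k = k' + 1 := ⟨k - 1, by omega⟩
  exact ⟨(e.symm 0).val, (e.symm 0).2⟩

lemma subgraph_walk {V : Type*} {G : SimpleGraph V} {H : G.Subgraph}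
    (h : IsPathGraph H.coe) {x y : V} (hx : x ∈ H.verts) (hy : y ∈ H.verts) :
    ∃ w : G.Walk x y, ∀ z ∈ w.support, z ∈ H.verts := by
  obtain ⟨k, hk, ⟨e⟩⟩ := h
  obtain ⟨k', rfl⟩ : ∃ k', k = k' + 1 := ⟨k - 1, by omega⟩
  have hreach : H.coe.Reachable ⟨x, hx⟩ ⟨y, hy⟩ :=
    Iso.reachable_iff.mp ((pathGraph_connected k').preconnected (e ⟨x, hx⟩) (e ⟨y, hy⟩))
  obtain ⟨p⟩ := hreach
  refine ⟨p.map H.hom, ?_⟩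
  intro z hz
  change z ∈ (p.map H.hom).support at hz
  rw [Walk.support_map, List.mem_map] at hz
  obtain ⟨z', _, rfl⟩ := hz
  exact z'.2

lemma mem_ball_elim (w x : Fin 7) (hx : x ∈ (_root_.ball longClaw w 3).verts) :
    x = w ∨ longClaw.Adj w x := by
  obtain ⟨hr, hd⟩ := hx
  have hd1 : longClaw.dist w x ≤ 1 := hd
  rcases Nat.eq_zero_or_pos (longClaw.dist w x) with h0 | hpos
  · left; exact ((hr.dist_eq_zero_iff).mp h0).symm
  · right; exact SimpleGraph.dist_eq_one_iff_adj.mp (le_antisymm hd1 hpos)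

lemma ball_adj_iff (w : Fin 7) (x y : (_root_.ball longClaw w 3).verts) :
    (_root_.ball longClaw w 3).coe.Adj x y ↔ longClaw.Adj x.val y.val := by
  constructor
  · intro h; exact h.1
  · intro h
    refine ⟨h, x.2, y.2, ?_⟩
    have h1 : longClaw.dist w x.val ≤ 3 / 2 := x.2.2
    have h2 : longClaw.dist w y.val ≤ 3 / 2 := y.2.2
    omega

lemma interval_rep (w : Fin 7) (f g : Fin 7 → ℤ) (hfg : ∀ v, f v ≤ g v)
    (h : ∀ x y : Fin 7, x ≠ y → (x = w ∨ adjB w x = true) → (y = w ∨ adjB w y = true) →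
      (adjB x y = true ↔ max (f x) (f y) ≤ min (g x) (g y))) :
    IsIntervalGraph (_root_.ball longClaw w 3).coe := by
  refine ⟨fun v => Set.Icc (f v.val : ℝ) (g v.val),
    fun v => ⟨_, _, by exact_mod_cast hfg v.val, rfl⟩, ?_⟩
  rintro ⟨x, hx⟩ ⟨y, hy⟩ hne
  have hne' : x ≠ y := fun hxy => hne (Subtype.ext hxy)
  have hx' : x = w ∨ adjB w x = true := by
    rcases mem_ball_elim w x hx with h1 | h1
    · exact Or.inl h1
    · exact Or.inr ((longClaw_adj w x).mp h1)
  have hy' : y = w ∨ adjB w y = true := by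
    rcases mem_ball_elim w y hy with h1 | h1
    · exact Or.inl h1
    · exact Or.inr ((longClaw_adj w y).mp h1)
  have hcast : ∀ a b c d : ℤ, (((a:ℝ) ⊔ (c:ℝ)) ≤ ((b:ℝ) ⊓ (d:ℝ))) ↔ (max a c ≤ min b d) := by
    intro a b c d
    simp only [sup_le_iff, le_inf_iff, max_le_iff, le_min_iff, Int.cast_le]

  rw [ball_adj_iff, longClaw_adj, h x y hne' hx' hy', Set.Icc_inter_Icc, Set.nonempty_Icc, hcast]

theorem longClaw_locally_interval : LocallyInterval longClaw 3 := by
  intro w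
  fin_cases w
  · exact interval_rep _ ![1,0,2,3,10,20,30] ![3,1,2,4,10,20,30] (by decide) (by decide)
  · exact interval_rep _ ![0,1,10,20,2,30,40] ![1,2,10,20,3,30,40] (by decide) (by decide)
  · exact interval_rep _ ![0,10,1,20,30,2,40] ![1,10,2,20,30,3,40] (by decide) (by decide)
  · exact interval_rep _ ![0,10,20,1,30,40,2] ![1,10,20,2,30,40,3] (by decide) (by decide)
  · exact interval_rep _ ![10,0,20,30,1,40,50] ![10,1,20,30,2,40,50] (by decide) (by decide)
  · exact interval_rep _ ![10,20,0,30,40,1,50] ![10,20,1,30,40,2,50] (by decide) (by decide)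
  · exact interval_rep _ ![10,20,30,0,40,50,1] ![10,20,30,1,40,50,2] (by decide) (by decide)

theorem longClaw_not_circularArc : ¬ IsCircularArcGraph longClaw := by
  rintro ⟨n, hn3, A, hpaths, hadj⟩
  obtain ⟨m, rfl⟩ : ∃ m, n = m + 3 := ⟨n - 3, by omega⟩
  have hmeet : ∀ u v : Fin 7, u ≠ v → longClaw.Adj u v →
      ∃ x, x ∈ (A u).verts ∧ x ∈ (A v).verts := by
    intro u v h1 h2
    obtain ⟨x, hx⟩ := (hadj u v h1).mp h2
    exact ⟨x, hx.1, hx.2⟩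
  have hdisj : ∀ u v : Fin 7, u ≠ v → ¬ longClaw.Adj u v →
      ∀ x, x ∈ (A u).verts → x ∉ (A v).verts :=
    fun u v h1 h2 x hxu hxv => h2 ((hadj u v h1).mpr ⟨x, hxu, hxv⟩)
  obtain ⟨t, ht4⟩ := subgraph_nonempty (hpaths 4)
  have ht0 : t ∉ (A 0).verts :=
    hdisj 4 0 (by decide) (fun h => absurd ((longClaw_adj 4 0).mp h) (by decide)) t ht4
  have getCross : ∀ j l : Fin 7, (0:Fin 7) ≠ j → longClaw.Adj 0 j → j ≠ l → longClaw.Adj j l →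
      (0:Fin 7) ≠ l → ¬ longClaw.Adj 0 l →
      ∃ i : Fin (m+3), (i ∈ (A j).verts ∧ i + 1 ∈ (A j).verts) ∧
        ((i ∈ (A 0).verts ∧ i + 1 ∉ (A 0).verts) ∨ (i ∉ (A 0).verts ∧ i + 1 ∈ (A 0).verts)) := by
    intro j l h0j haj hjl hajl h0l hnal
    obtain ⟨x, hxj, hx0⟩ := hmeet j 0 (Ne.symm h0j) haj.symm
    obtain ⟨y, hyj, hyl⟩ := hmeet j l hjl hajl
    have hy0 : y ∉ (A 0).verts := fun hy0 => hdisj 0 l h0l hnal y hy0 hyl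
    obtain ⟨wk, hwk⟩ := subgraph_walk (hpaths j) hxj hyj
    obtain ⟨a, b, hab, haT, hbT, haS, hbS⟩ := walk_cross (A 0).verts (A j).verts wk hwk hx0 hy0
    rw [cycleGraph_adj'] at hab
    rcases hab with h1 | h1
    · have hba : a = b + 1 := by
        have hb1 : a - b = 1 := Fin.ext (by rw [h1]; rfl)
        rw [← hb1]; exact (add_sub_cancel b a).symm
      exact ⟨b, ⟨hbT, hba ▸ haT⟩, Or.inr ⟨hbS, hba ▸ haS⟩⟩
    · have hba : b = a + 1 := by
        have hb1 : b - a = 1 := Fin.ext (by rw [h1]; rfl)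
        rw [← hb1]; exact (add_sub_cancel a b).symm
      exact ⟨a, ⟨haT, hba ▸ hbT⟩, Or.inl ⟨haS, hba ▸ hbS⟩⟩
  have hsub_inj : ∀ a b : Fin (m+3), (a - t).val = (b - t).val → a = b := by
    intro a b h
    have h1 : a - t = b - t := Fin.ext h
    have h2 := congrArg (· + t) h1
    simpa [sub_add_cancel] using h2
  have key_val : ∀ a : Fin (m+3), a + 1 ≠ t → (a + 1 - t).val = (a - t).val + 1 := by
    intro a ha
    rw [add_sub_right_comm]
    exact fin_add_one_val _ (by rw [← add_sub_right_comm]; exact sub_ne_zero.mpr ha)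
  have aux1 : ∀ i j : Fin (m+3), i ∈ (A 0).verts → i + 1 ∉ (A 0).verts →
      j ∈ (A 0).verts → j + 1 ∉ (A 0).verts → (i - t).val ≤ (j - t).val → i = j := by
    intro i j hi hi1 hj hj1 hle
    rcases Nat.eq_or_lt_of_le hle with heq | hlt
    · exact hsub_inj i j heq
    · exfalso
      by_cases hit : i + 1 = t
      · have hz0 : (i - t) + 1 = 0 := by
          rw [← add_sub_right_comm, hit, sub_self]
        have hv := fin_add_one_eq_zero _ hz0
        have := (j - t).isLt
        omega
      · obtain ⟨wk, hwk⟩ := subgraph_walk (hpaths 0) hi hj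
        obtain ⟨z, hz, hzv⟩ := fin_ivt t wk (fun z hz he => ht0 (he ▸ hwk z hz))
          ((i - t).val + 1) (Or.inl ⟨by omega, by omega⟩)
        have hz0 : z ∈ (A 0).verts := hwk z hz
        have hzi : z = i + 1 := hsub_inj z (i+1) (by rw [key_val i hit, hzv])
        exact hi1 (hzi ▸ hz0)
  have aux2 : ∀ i j : Fin (m+3), i ∉ (A 0).verts → i + 1 ∈ (A 0).verts →
      j ∉ (A 0).verts → j + 1 ∈ (A 0).verts → (i + 1 - t).val ≤ (j + 1 - t).val → i = j := by
    intro i j hi hi1 hj hj1 hle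
    rcases Nat.eq_or_lt_of_le hle with heq | hlt
    · exact add_right_cancel (hsub_inj _ _ heq)
    · exfalso
      have hjt : j + 1 ≠ t := fun he => ht0 (he ▸ hj1)
      obtain ⟨wk, hwk⟩ := subgraph_walk (hpaths 0) hi1 hj1
      obtain ⟨z, hz, hzv⟩ := fin_ivt t wk (fun z hz he => ht0 (he ▸ hwk z hz))
        ((j + 1 - t).val - 1) (Or.inl ⟨by omega, by omega⟩)
      have hk := key_val j hjt
      have hzj : z = j := hsub_inj z j (by omega)
      exact hj (hzj ▸ hwk z hz)
  have uniq1 : ∀ i j : Fin (m+3), i ∈ (A 0).verts → i + 1 ∉ (A 0).verts →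
      j ∈ (A 0).verts → j + 1 ∉ (A 0).verts → i = j := by
    intro i j hi hi1 hj hj1
    rcases le_total ((i - t).val) ((j - t).val) with h | h
    · exact aux1 i j hi hi1 hj hj1 h
    · exact (aux1 j i hj hj1 hi hi1 h).symm
  have uniq2 : ∀ i j : Fin (m+3), i ∉ (A 0).verts → i + 1 ∈ (A 0).verts →
      j ∉ (A 0).verts → j + 1 ∈ (A 0).verts → i = j := by
    intro i j hi hi1 hj hj1
    rcases le_total ((i + 1 - t).val) ((j + 1 - t).val) with h | h
    · exact aux2 i j hi hi1 hj hj1 h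
    · exact (aux2 j i hj hj1 hi hi1 h).symm
  obtain ⟨i1, ⟨hi1a, hi1b⟩, hc1⟩ := getCross 1 4 (by decide)
    ((longClaw_adj 0 1).mpr (by decide)) (by decide) ((longClaw_adj 1 4).mpr (by decide))
    (by decide) (fun h => absurd ((longClaw_adj 0 4).mp h) (by decide))
  obtain ⟨i2, ⟨hi2a, hi2b⟩, hc2⟩ := getCross 2 5 (by decide)
    ((longClaw_adj 0 2).mpr (by decide)) (by decide) ((longClaw_adj 2 5).mpr (by decide))
    (by decide) (fun h => absurd ((longClaw_adj 0 5).mp h) (by decide))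
  obtain ⟨i3, ⟨hi3a, hi3b⟩, hc3⟩ := getCross 3 6 (by decide)
    ((longClaw_adj 0 3).mpr (by decide)) (by decide) ((longClaw_adj 3 6).mpr (by decide))
    (by decide) (fun h => absurd ((longClaw_adj 0 6).mp h) (by decide))
  have d12 : i1 ≠ i2 := fun he =>
    hdisj 1 2 (by decide) (fun h => absurd ((longClaw_adj 1 2).mp h) (by decide)) i1 hi1a (he ▸ hi2a)
  have d13 : i1 ≠ i3 := fun he =>
    hdisj 1 3 (by decide) (fun h => absurd ((longClaw_adj 1 3).mp h) (by decide)) i1 hi1a (he ▸ hi3a)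
  have d23 : i2 ≠ i3 := fun he =>
    hdisj 2 3 (by decide) (fun h => absurd ((longClaw_adj 2 3).mp h) (by decide)) i2 hi2a (he ▸ hi3a)
  rcases hc1 with h1 | h1 <;> rcases hc2 with h2 | h2 <;> rcases hc3 with h3 | h3
  · exact d12 (uniq1 i1 i2 h1.1 h1.2 h2.1 h2.2)
  · exact d12 (uniq1 i1 i2 h1.1 h1.2 h2.1 h2.2)
  · exact d13 (uniq1 i1 i3 h1.1 h1.2 h3.1 h3.2)
  · exact d23 (uniq2 i2 i3 h2.1 h2.2 h3.1 h3.2)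
  · exact d23 (uniq1 i2 i3 h2.1 h2.2 h3.1 h3.2)
  · exact d13 (uniq2 i1 i3 h1.1 h1.2 h3.1 h3.2)
  · exact d12 (uniq2 i1 i2 h1.1 h1.2 h2.1 h2.2)
  · exact d12 (uniq2 i1 i2 h1.1 h1.2 h2.1 h2.2)

/-- The long claw is 3-locally interval but is not a circular-arc graph. -/
theorem stmt_12 : LocallyInterval longClaw 3 ∧ ¬ IsCircularArcGraph longClaw :=
  ⟨longClaw_locally_interval, longClaw_not_circularArc⟩
end

section
/- None of the three augmented long claws is a circular-arc graph. -/
open SimpleGraph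

lemma walk_boundary {V : Type*} {G : SimpleGraph V} (P : V → Prop) :
    ∀ {a b : V} (w : G.Walk a b), P a → ¬ P b →
    ∃ u v, G.Adj u v ∧ u ∈ w.support ∧ v ∈ w.support ∧ P u ∧ ¬ P v := by
  intro a b w
  induction w with
  | nil => intro h h'; exact absurd h h'
  | @cons a c b h p ih =>
    intro ha hb
    by_cases hc : P c
    · obtain ⟨u, v, h1, h2, h3, h4, h5⟩ := ih hc hb
      exact ⟨u, v, h1, by simp [h2], by simp [h3], h4, h5⟩
    · exact ⟨a, c, h, by simp, by simp, ha, hc⟩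

lemma fin_one_val {n : ℕ} (hn : 3 ≤ n) [NeZero n] : (1 : Fin n).val = 1 := by
  rw [Fin.val_one', Nat.mod_eq_of_lt (by omega)]

lemma fin_val_add_one {n : ℕ} (hn : 3 ≤ n) [NeZero n] (z : Fin n) :
    (z + 1).val = if z.val = n - 1 then 0 else z.val + 1 := by
  have h1 : (z + 1).val = (z.val + 1) % n := by rw [Fin.val_add, fin_one_val hn]
  have hz := z.isLt
  by_cases h : z.val = n - 1
  · rw [h1, if_pos h, h]
    have h2 : n - 1 + 1 = n := by omega
    rw [h2, Nat.mod_self]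
  · rw [h1, if_neg h, Nat.mod_eq_of_lt (by omega)]

lemma fin_neg_one_val {n : ℕ} (hn : 3 ≤ n) [NeZero n] : ((-1 : Fin n)).val = n - 1 := by
  obtain ⟨m, rfl⟩ : ∃ m, n = m + 1 := ⟨n - 1, by omega⟩
  simp [Fin.coe_neg_one]

lemma step {n : ℕ} (hn : 3 ≤ n) [NeZero n] {i j x : Fin n}
    (hne : ¬(((x - i - 1).val ≤ (j - i - 1).val) ↔ ((x + 1 - i - 1).val ≤ (j - i - 1).val))) :
    x = i ∨ x = j := by
  have key : x + 1 - i - 1 = (x - i - 1) + 1 := by abel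
  rw [key] at hne
  have h1 := fin_val_add_one hn (x - i - 1)
  by_cases h : (x - i - 1).val = n - 1
  · left
    have h2 : x - i - 1 = -1 := Fin.val_injective (by rw [h, fin_neg_one_val hn])
    have h3 : x - i = 0 := by
      have := congrArg (· + 1) h2
      simpa [sub_add_cancel] using this
    exact sub_eq_zero.mp h3
  · right
    rw [if_neg h] at h1
    rw [h1] at hne
    have h2 : (x - i - 1).val = (j - i - 1).val := by omega
    have h3 : x - i - 1 = j - i - 1 := Fin.val_injective h2
    have h4 : x - i = j - i := by
      have := congrArg (· + 1) h3
      simpa [sub_add_cancel] using this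
    exact sub_left_inj.mp h4

lemma adj_succ {n : ℕ} (hn : 3 ≤ n) [NeZero n] {u v : Fin n} (h : (cycleGraph n).Adj u v) :
    v = u + 1 ∨ u = v + 1 := by
  rw [cycleGraph_adj'] at h
  rcases h with h | h
  · right
    have h2 : u - v = 1 := Fin.val_injective (h.trans (fin_one_val hn).symm)
    rw [← h2]; abel
  · left
    have h2 : v - u = 1 := Fin.val_injective (h.trans (fin_one_val hn).symm)
    rw [← h2]; abel

lemma no_double_exit {n : ℕ} (hn : 3 ≤ n) [NeZero n] {S : Set (Fin n)} {i j : Fin n}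
    (hij : i ≠ j) (hi1 : i + 1 ∉ S) (hj1 : j + 1 ∉ S)
    (w : (cycleGraph n).Walk i j) (hw : ∀ x ∈ w.support, x ∈ S) : False := by
  set f : Fin n → Prop := fun x => (x - i - 1).val ≤ (j - i - 1).val with hf
  have hdn : (j - i - 1).val < n - 1 := by
    have hle : (j - i - 1).val < n := (j - i - 1).isLt
    rcases Nat.lt_or_ge (j - i - 1).val (n - 1) with h | h
    · exact h
    · exfalso
      have he : (j - i - 1).val = n - 1 := by omega
      have h2 : j - i - 1 = -1 := Fin.val_injective (by rw [he, fin_neg_one_val hn])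
      have h3 : j - i = 0 := by
        have := congrArg (· + 1) h2
        simpa [sub_add_cancel] using this
      exact hij (sub_eq_zero.mp h3).symm
  have hfi : ¬ f i := by
    simp only [hf]
    have h2 : i - i - 1 = -1 := by abel
    rw [h2, fin_neg_one_val hn]
    omega
  have hfj : f j := le_refl _
  obtain ⟨u, v, hadj, hu, hv, hPu, hPv⟩ :=
    walk_boundary (fun x => ¬ f x) w hfi (by simpa using hfj)
  have hfv : f v := not_not.mp hPv
  rcases adj_succ hn hadj with h | h
  · have hst := step hn (i := i) (j := j) (x := u)
      (by rw [← h]; intro hiff; exact hPu (hiff.mpr hfv))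
    rcases hst with rfl | rfl
    · exact hi1 (h ▸ hw v hv)
    · exact hj1 (h ▸ hw v hv)
  · have hst := step hn (i := i) (j := j) (x := v)
      (by rw [← h]; intro hiff; exact hPu (hiff.mp hfv))
    rcases hst with rfl | rfl
    · exact hi1 (h ▸ hw u hu)
    · exact hj1 (h ▸ hw u hu)

def negHom {n : ℕ} [NeZero n] : cycleGraph n →g cycleGraph n where
  toFun := fun x => -x
  map_rel' := by
    intro u v h
    rw [cycleGraph_adj'] at h ⊢
    have h1 : -u - -v = v - u := by abel
    have h2 : -v - -u = u - v := by abel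
    rw [h1, h2]
    exact h.symm

lemma no_double_exit' {n : ℕ} (hn : 3 ≤ n) [NeZero n] {S : Set (Fin n)} {i j : Fin n}
    (hij : i ≠ j) (hi1 : i - 1 ∉ S) (hj1 : j - 1 ∉ S)
    (w : (cycleGraph n).Walk i j) (hw : ∀ x ∈ w.support, x ∈ S) : False := by
  refine no_double_exit hn (S := {x | -x ∈ S}) (i := -i) (j := -j)
    (fun h => hij (neg_injective h)) ?_ ?_ (w.map negHom) ?_
  · show ¬ (-(-i + 1) ∈ S)
    have h : -(-i + 1) = i - 1 := by abel
    rw [h]; exact hi1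
  · show ¬ (-(-j + 1) ∈ S)
    have h : -(-j + 1) = j - 1 := by abel
    rw [h]; exact hj1
  · intro x hx
    have hx2 : x ∈ (w.map negHom).support := hx
    rw [SimpleGraph.Walk.support_map] at hx2
    replace hx := hx2
    obtain ⟨y, hy, hxy⟩ := List.mem_map.mp hx
    show -x ∈ S
    have h : -x = y := by rw [← hxy]; exact neg_neg y
    rw [h]
    exact hw y hy

lemma arc_nonempty {n : ℕ} {H : (cycleGraph n).Subgraph} (hp : IsPathGraph H.coe) :
    H.verts.Nonempty := by
  obtain ⟨m, hm, ⟨e⟩⟩ := hp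
  obtain ⟨k, rfl⟩ : ∃ k, m = k + 1 := ⟨m - 1, by omega⟩
  exact ⟨(e.symm 0).1, (e.symm 0).2⟩

lemma arc_walk {n : ℕ} {H : (cycleGraph n).Subgraph} (hp : IsPathGraph H.coe)
    {x y : Fin n} (hx : x ∈ H.verts) (hy : y ∈ H.verts) :
    ∃ w : (cycleGraph n).Walk x y, ∀ z ∈ w.support, z ∈ H.verts := by
  obtain ⟨m, hm, ⟨e⟩⟩ := hp
  obtain ⟨k, rfl⟩ : ∃ k, m = k + 1 := ⟨m - 1, by omega⟩
  have hconn : H.coe.Connected := e.connected_iff.mpr (pathGraph_connected k)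
  obtain ⟨ww⟩ := hconn.preconnected ⟨x, hx⟩ ⟨y, hy⟩
  refine ⟨ww.map H.hom, ?_⟩
  intro z hz
  have hz2 : z ∈ (ww.map H.hom).support := hz
  rw [SimpleGraph.Walk.support_map] at hz2
  replace hz := hz2
  obtain ⟨a, _, rfl⟩ := List.mem_map.mp hz
  exact a.2

theorem main_lemma {G : SimpleGraph (Fin 7)}
    (a01 : G.Adj 0 1) (a02 : G.Adj 0 2) (a03 : G.Adj 0 3)
    (a14 : G.Adj 1 4) (a25 : G.Adj 2 5) (a36 : G.Adj 3 6)
    (n12 : ¬G.Adj 1 2) (n13 : ¬G.Adj 1 3) (n23 : ¬G.Adj 2 3)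
    (n04 : ¬G.Adj 0 4) (n05 : ¬G.Adj 0 5) (n06 : ¬G.Adj 0 6) :
    ¬ IsCircularArcGraph G := by
  rintro ⟨n, hn, A, hpath, hiff⟩
  haveI : NeZero n := ⟨by omega⟩
  have key : ∀ mi li : Fin 7, (0:Fin 7) ≠ mi → (0:Fin 7) ≠ li → mi ≠ li →
      G.Adj 0 mi → G.Adj mi li → ¬ G.Adj 0 li →
      ∃ b, b ∈ (A mi).verts ∧ b ∈ (A 0).verts ∧
        (b + 1 ∉ (A 0).verts ∨ b - 1 ∉ (A 0).verts) := by
    intro mi li hm0 hl0 hml0 h0m hml h0l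
    obtain ⟨x, hx⟩ := (hiff 0 mi hm0).mp h0m
    have hout : ∃ y ∈ (A mi).verts, y ∉ (A 0).verts := by
      by_contra hcon
      push_neg at hcon
      obtain ⟨p, hp⟩ := (hiff mi li hml0).mp hml
      exact h0l ((hiff 0 li hl0).mpr ⟨p, hcon p hp.1, hp.2⟩)
    obtain ⟨y, hym, hy0⟩ := hout
    obtain ⟨w, hw⟩ := arc_walk (hpath mi) hx.2 hym
    obtain ⟨u, v, hadj, hu, hv, hPu, hPv⟩ :=
      walk_boundary (· ∈ (A 0).verts) w hx.1 hy0
    refine ⟨u, hw u hu, hPu, ?_⟩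
    rcases adj_succ hn hadj with h | h
    · left; rw [← h]; exact hPv
    · right
      have h2 : u - 1 = v := by rw [h]; abel
      rw [h2]; exact hPv
  obtain ⟨b1, hb1m, hb10, c1⟩ := key 1 4 (by decide) (by decide) (by decide) a01 a14 n04
  obtain ⟨b2, hb2m, hb20, c2⟩ := key 2 5 (by decide) (by decide) (by decide) a02 a25 n05
  obtain ⟨b3, hb3m, hb30, c3⟩ := key 3 6 (by decide) (by decide) (by decide) a03 a36 n06
  have hne12 : b1 ≠ b2 := fun h =>
    n12 ((hiff 1 2 (by decide)).mpr ⟨b1, hb1m, h ▸ hb2m⟩)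
  have hne13 : b1 ≠ b3 := fun h =>
    n13 ((hiff 1 3 (by decide)).mpr ⟨b1, hb1m, h ▸ hb3m⟩)
  have hne23 : b2 ≠ b3 := fun h =>
    n23 ((hiff 2 3 (by decide)).mpr ⟨b2, hb2m, h ▸ hb3m⟩)
  have fin : ∀ p q : Fin n, p ∈ (A 0).verts → q ∈ (A 0).verts → p ≠ q →
      ((p + 1 ∉ (A 0).verts ∧ q + 1 ∉ (A 0).verts) ∨
        (p - 1 ∉ (A 0).verts ∧ q - 1 ∉ (A 0).verts)) → False := by
    intro p q hp hq hpq hd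
    obtain ⟨w, hw⟩ := arc_walk (hpath 0) hp hq
    rcases hd with ⟨h1, h2⟩ | ⟨h1, h2⟩
    · exact no_double_exit hn hpq h1 h2 w hw
    · exact no_double_exit' hn hpq h1 h2 w hw
  rcases c1 with c1 | c1 <;> rcases c2 with c2 | c2 <;> rcases c3 with c3 | c3 <;>
    first
      | exact fin _ _ hb10 hb20 hne12 (Or.inl ⟨c1, c2⟩)
      | exact fin _ _ hb10 hb30 hne13 (Or.inl ⟨c1, c3⟩)
      | exact fin _ _ hb20 hb30 hne23 (Or.inl ⟨c2, c3⟩)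
      | exact fin _ _ hb10 hb20 hne12 (Or.inr ⟨c1, c2⟩)
      | exact fin _ _ hb10 hb30 hne13 (Or.inr ⟨c1, c3⟩)
      | exact fin _ _ hb20 hb30 hne23 (Or.inr ⟨c2, c3⟩)

theorem notCAG1 : ¬ IsCircularArcGraph augLongClaw1 := by
  apply main_lemma <;> simp [augLongClaw1]

theorem notCAG2 : ¬ IsCircularArcGraph augLongClaw2 := by
  apply main_lemma <;> simp [augLongClaw2]

set_option maxHeartbeats 1000000 in
theorem notCAG3 : ¬ IsCircularArcGraph augLongClaw3 := by
  apply main_lemma <;> simp [augLongClaw3]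

/-- None of the three augmented long claws is a circular-arc graph. -/
theorem stmt_13 :
    ¬ IsCircularArcGraph augLongClaw1 ∧ ¬ IsCircularArcGraph augLongClaw2 ∧
      ¬ IsCircularArcGraph augLongClaw3 :=
  ⟨notCAG1, notCAG2, notCAG3⟩
end

section
/- Every finite 3-acyclic circular-arc graph is 3-locally interval. -/
open SimpleGraph

open Fin.CommRing

lemma cycleGraph_not_isAcyclic {n : ℕ} (hn : 3 ≤ n) : ¬ (cycleGraph n).IsAcyclic := by
  haveI : NeZero n := ⟨by omega⟩
  have hval1 : ((1 : Fin n) : ℕ) = 1 := by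
    simp [Fin.val_one', Nat.mod_eq_of_lt (by omega : 1 < n)]
  have hvadd : ∀ u : Fin n, ((u + 1 : Fin n) : ℕ) = if u.val + 1 = n then 0 else u.val + 1 := by
    intro u
    rw [Fin.val_add, hval1]
    rcases Nat.lt_or_ge (u.val + 1) n with h | h
    · rw [Nat.mod_eq_of_lt h, if_neg (by omega)]
    · have : u.val + 1 = n := by have := u.isLt; omega
      simp [this]
  have hadj : ∀ u : Fin n, (cycleGraph n).Adj u (u + 1) := by
    intro u
    rw [cycleGraph_adj']
    right
    rw [add_sub_cancel_left, hval1]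
  rw [isAcyclic_iff_forall_adj_isBridge]
  intro h
  have hb := h (hadj 0)
  rw [isBridge_iff] at hb
  apply hb
  have hfadj : ∀ ⦃u v : Fin n⦄, (pathGraph n).Adj u v →
      (cycleGraph n \ fromEdgeSet {s((0 : Fin n), 0 + 1)}).Adj (u + 1) (v + 1) := by
    intro u v huv
    rw [pathGraph_adj] at huv
    constructor
    · rcases huv with h1 | h1
      · have : v = u + 1 := by
          apply Fin.ext
          rw [hvadd, if_neg (by rw [h1]; exact Nat.ne_of_lt v.isLt), h1]
        rw [this]; exact hadj (u+1)
      · have : u = v + 1 := by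
          apply Fin.ext
          rw [hvadd, if_neg (by rw [h1]; exact Nat.ne_of_lt u.isLt), h1]
        rw [this]; exact (hadj (v+1)).symm
    · rw [fromEdgeSet_adj]
      rintro ⟨hmem, -⟩
      simp only [Set.mem_singleton_iff, Sym2.eq, Sym2.rel_iff', Prod.mk.injEq,
        Prod.swap_prod_mk] at hmem
      have h01 : ((0 + 1 : Fin n) : ℕ) = 1 := by rw [hvadd]; simp; omega
      rcases hmem with ⟨ha, hb'⟩ | ⟨ha, hb'⟩ <;>
      · have hu := congrArg Fin.val ha
        have hv := congrArg Fin.val hb'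
        rw [hvadd] at hu hv
        simp only [Fin.val_zero, h01] at hu hv
        have hun := u.isLt; have hvn := v.isLt
        split at hu <;> split at hv <;> omega
  have hreach : (pathGraph n).Reachable ⟨n-1, by omega⟩ ⟨0, by omega⟩ :=
    pathGraph_preconnected n _ _
  have hmap := hreach.map (⟨fun i => i + 1, fun h => hfadj h⟩ :
    pathGraph n →g (cycleGraph n \ fromEdgeSet {s((0 : Fin n), 0 + 1)}))
  have hcoe : ∀ a : Fin n, (⟨fun i => i + 1, fun h => hfadj h⟩ :
    pathGraph n →g (cycleGraph n \ fromEdgeSet {s((0 : Fin n), 0 + 1)})) a = a + 1 := fun _ => rfl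
  rw [hcoe, hcoe] at hmap
  have h1 : (⟨n-1, by omega⟩ : Fin n) + 1 = 0 := by
    apply Fin.ext
    rw [hvadd]
    simp only [Fin.val_zero]
    rw [if_pos (by omega)]
  have h2 : (⟨0, by omega⟩ : Fin n) = 0 := by apply Fin.ext; simp
  rw [h1, h2] at hmap
  exact hmap
lemma arc_structure {n : ℕ} [NeZero n] (hn : 3 ≤ n) (S : (cycleGraph n).Subgraph)
    (hp : IsPathGraph S.coe) :
    ∃ (a : Fin n) (m : ℕ), 1 ≤ m ∧ m ≤ n ∧
      (∀ p : Fin n, p ∈ S.verts ↔ ∃ i : ℕ, i < m ∧ p = a + (i : Fin n)) ∧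
      (∀ i : ℕ, i + 1 < m → S.Adj (a + (i : Fin n)) (a + ((i+1 : ℕ) : Fin n))) := by
  have hval1 : ((1 : Fin n) : ℕ) = 1 := by
    simp [Fin.val_one', Nat.mod_eq_of_lt (by omega : 1 < n)]
  obtain ⟨m, hm1, ⟨φ⟩⟩ := hp
  set w : Fin m → Fin n := fun k => ((φ.symm k : S.verts) : Fin n) with hw
  have hwmem : ∀ k, w k ∈ S.verts := fun k => (φ.symm k).2
  have hwinj : Function.Injective w := by
    intro k l hkl
    have : (φ.symm k : S.verts) = (φ.symm l : S.verts) := Subtype.ext hkl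
    exact φ.symm.injective this
  have hmn : m ≤ n := by
    have := Fintype.card_le_of_injective w hwinj
    simpa using this
  have hsurj : ∀ p, p ∈ S.verts → ∃ k, w k = p := by
    intro p hp
    exact ⟨φ ⟨p, hp⟩, by simp [hw]⟩
  have hadjS : ∀ k l : Fin m, (pathGraph m).Adj k l → S.Adj (w k) (w l) := by
    intro k l hkl
    have : S.coe.Adj (φ.symm k) (φ.symm l) := φ.symm.map_adj_iff.mpr hkl
    exact this
  rcases Nat.lt_or_ge m 2 with hm2 | hm2
  · -- m = 1
    have hm : m = 1 := by omega
    subst hm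
    refine ⟨w 0, 1, le_refl _, by omega, ?_, by omega⟩
    intro p
    constructor
    · intro hp
      obtain ⟨k, hk⟩ := hsurj p hp
      exact ⟨0, by omega, by rw [← hk, Fin.fin_one_eq_zero k]; simp⟩
    · rintro ⟨i, hi, rfl⟩
      have : i = 0 := by omega
      subst this
      simpa using hwmem 0
  · -- m ≥ 2
    have hlt : ∀ i : ℕ, min i (m-1) < m := fun i => by omega
    set W : ℕ → Fin n := fun i => w ⟨min i (m-1), hlt i⟩ with hWdef
    have hWeq : ∀ i (h : i < m), W i = w ⟨i, h⟩ := by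
      intro i h
      simp only [hWdef]
      congr 1
      exact Fin.ext (by simp; omega)
    have hWmem : ∀ i, W i ∈ S.verts := fun i => hwmem _
    have hstep : ∀ i : ℕ, i + 1 < m → S.Adj (W i) (W (i+1)) := by
      intro i h
      rw [hWeq i (by omega), hWeq (i+1) h]
      apply hadjS
      rw [pathGraph_adj]
      left; rfl
    have hWinj : ∀ i j, i < m → j < m → W i = W j → i = j := by
      intro i j hi hj hij
      rw [hWeq i hi, hWeq j hj] at hij
      have := hwinj hij
      exact congrArg Fin.val this
    have hone : ∀ u v : Fin n, (cycleGraph n).Adj u v → v = u + 1 ∨ v = u - 1 := by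
      intro u v huv
      rw [cycleGraph_adj'] at huv
      rcases huv with h1 | h1
      · right
        have : u - v = 1 := Fin.ext (by rw [h1, hval1])
        rw [← this]; ring_nf
      · left
        have : v - u = 1 := Fin.ext (by rw [h1, hval1])
        rw [← this]; ring_nf
    set e : Fin n := W 1 - W 0 with he
    have he1 : W 1 = W 0 + e := by rw [he]; ring
    have hee : e = 1 ∨ e = -1 := by
      rcases hone (W 0) (W 1) (Subgraph.adj_sub S (hstep 0 (by omega))) with h1 | h1
      · left; rw [he, h1]; ring
      · right; rw [he, h1]; ring
    have hsame : ∀ i : ℕ, i + 1 < m → W (i+1) = W i + e := by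
      intro i
      induction i with
      | zero => intro _; exact he1
      | succ i ih =>
        intro h
        have hprev : W (i+1) = W i + e := ih (by omega)
        rcases hone (W (i+1)) (W (i+2)) (Subgraph.adj_sub S (hstep (i+1) h)) with h1 | h1
        · rcases hee with he' | he'
          · rw [h1, he']
          · exfalso
            have : W (i+2) = W i := by rw [h1, hprev, he']; ring
            have := hWinj _ _ (by omega) (by omega) this
            omega
        · rcases hee with he' | he'
          · exfalso
            have : W (i+2) = W i := by rw [h1, hprev, he']; ring
            have := hWinj _ _ (by omega) (by omega) this
            omega
          · rw [h1, he']; ring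
    rcases hee with he' | he'
    · -- increasing case
      refine ⟨W 0, m, by omega, hmn, ?_, ?_⟩
      · have hWi : ∀ i : ℕ, i < m → W i = W 0 + (i : Fin n) := by
          intro i
          induction i with
          | zero => intro _; simp
          | succ i ih =>
            intro h
            rw [hsame i h, ih (by omega), he']
            push_cast
            ring
        intro p
        constructor
        · intro hp
          obtain ⟨k, hk⟩ := hsurj p hp
          refine ⟨k.val, k.isLt, ?_⟩
          rw [← hWi k.val k.isLt, hWeq k.val k.isLt, ← hk]
        · rintro ⟨i, hi, rfl⟩
          rw [← hWi i hi]; exact hWmem i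
      · intro i h
        have hWi : ∀ j : ℕ, j < m → W j = W 0 + (j : Fin n) := by
          intro j
          induction j with
          | zero => intro _; simp
          | succ j ih =>
            intro hj
            rw [hsame j hj, ih (by omega), he']
            push_cast
            ring
        rw [← hWi i (by omega), ← hWi (i+1) h]
        exact hstep i h
    · -- decreasing case
      have hWi : ∀ i : ℕ, i < m → W (m-1-i) = W (m-1) + (i : Fin n) := by
        intro i
        induction i with
        | zero => intro _; simp
        | succ i ih =>
          intro h
          have hj : (m-2-i) + 1 < m := by omega
          have h1 : m - 1 - i = (m-2-i) + 1 := by omega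
          have h2 : m - 1 - (i+1) = m-2-i := by omega
          have := hsame (m-2-i) hj
          rw [← h1] at this
          rw [ih (by omega), he'] at this
          rw [h2]
          have h5 : W (m-2-i) = W (m-1) + (i : Fin n) + 1 := by
            have h3 : W (m-1) + (i : Fin n) = W (m-2-i) + -1 := this
            rw [eq_comm, ← sub_eq_iff_eq_add] at h3
            rw [← h3]; ring
          rw [h5]
          push_cast
          ring
      refine ⟨W (m-1), m, by omega, hmn, ?_, ?_⟩
      · intro p
        constructor
        · intro hp
          obtain ⟨k, hk⟩ := hsurj p hp
          refine ⟨m-1-k.val, by omega, ?_⟩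
          have h4 : m - 1 - (m - 1 - k.val) = k.val := by omega
          rw [← hWi (m-1-k.val) (by omega), h4, hWeq k.val k.isLt, ← hk]
        · rintro ⟨i, hi, rfl⟩
          rw [← hWi i hi]; exact hWmem _
      · intro i h
        have h1 : m - 1 - i = (m-2-i) + 1 := by omega
        have h2 : m - 1 - (i+1) = m-2-i := by omega
        rw [← hWi i (by omega), ← hWi (i+1) h, h1, h2]
        exact (hstep (m-2-i) (by omega)).symm
/-- Every finite 3-acyclic circular-arc graph is 3-locally interval. -/
theorem stmt_14 {V : Type*} [Fintype V] (G : SimpleGraph V)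
    (h : IsRAcyclicCircularArcGraph G 3) : LocallyInterval G 3 := by
  intro v
  haveI := Classical.decEq V
  obtain ⟨n, hn3, A, ⟨hpaths, hGadj⟩, hacyc⟩ := h
  haveI : NeZero n := ⟨by omega⟩
  have hval1 : ((1 : Fin n) : ℕ) = 1 := by
    simp [Fin.val_one', Nat.mod_eq_of_lt (by omega : 1 < n)]
  choose a m hm1 hmn hverts hedges using fun x => arc_structure hn3 (A x) (hpaths x)
  set B := (_root_.ball G v 3).verts with hBdef
  have hvB : v ∈ B := ⟨Reachable.refl v, by simp [SimpleGraph.dist_self]⟩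
  have hcommon : ∀ x : B, ∃ si : ℕ × ℕ, si.1 < m v ∧ si.2 < m (x : V) ∧
      a (x : V) + (si.2 : Fin n) = a v + (si.1 : Fin n) := by
    rintro ⟨x, hx⟩
    rcases eq_or_ne x v with rfl | hne
    · exact ⟨(0, 0), hm1 _, hm1 _, rfl⟩
    · have hdx : G.dist v x ≤ 1 := hx.2
      have hre : G.Reachable v x := hx.1
      have hd1 : G.dist v x = 1 := by
        rcases Nat.le_one_iff_eq_zero_or_eq_one.mp hdx with h0 | h1
        · exact absurd (hre.dist_eq_zero_iff.mp h0).symm hne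
        · exact h1
      have hadjvx : G.Adj v x := SimpleGraph.dist_eq_one_iff_adj.mp hd1
      obtain ⟨p, hp1, hp2⟩ := (hGadj v x hadjvx.ne).mp hadjvx
      obtain ⟨s, hs, rfl⟩ := (hverts v p).mp hp1
      obtain ⟨i, hi, hpi⟩ := (hverts x _).mp hp2
      exact ⟨(s, i), hs, hi, hpi.symm⟩
  choose si hs hi hcomm using hcommon
  set σ : B → ℤ := fun x => ((si x).1 : ℤ) - ((si x).2 : ℤ) with hσdef
  have hσfin : ∀ x : B, a (x : V) = a v + ((σ x : ℤ) : Fin n) := by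
    intro x
    have h' := hcomm x
    have hc : ((σ x : ℤ) : Fin n) = ((si x).1 : Fin n) - ((si x).2 : Fin n) := by
      simp only [hσdef]; push_cast; ring
    rw [hc]
    linear_combination h'
  have hvert : ∀ (x : B) (j : ℕ) (z : ℤ), (j : ℤ) = z - σ x →
      a (x : V) + (j : Fin n) = a v + (z : Fin n) := by
    intro x j z hj
    rw [hσfin x]
    have hz : z = σ x + (j : ℤ) := by omega
    rw [hz]
    push_cast
    ring
  have hmemz : ∀ (x : B) (z : ℤ), σ x ≤ z → z ≤ σ x + (m (x : V) : ℤ) - 1 →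
      (a v + (z : Fin n)) ∈ (A (x : V)).verts := by
    intro x z h1 h2
    refine (hverts _ _).mpr ⟨(z - σ x).toNat, by omega, ?_⟩
    exact (hvert x _ z (by omega)).symm
  have hedgez : ∀ (x : B) (z : ℤ), σ x ≤ z → z + 1 ≤ σ x + (m (x : V) : ℤ) - 1 →
      (A (x : V)).Adj (a v + (z : Fin n)) (a v + ((z + 1 : ℤ) : Fin n)) := by
    intro x z h1 h2
    have hlt : (z - σ x).toNat + 1 < m (x : V) := by omega
    have he := hedges (x : V) ((z - σ x).toNat) hlt
    rw [hvert x _ z (by omega), hvert x _ (z + 1) (by push_cast; omega)] at he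
    exact he
  have hσle : ∀ x : B, σ x ≤ (m v : ℤ) - 1 := by
    intro x
    have := hs x
    simp only [hσdef]
    omega
  have hσge : ∀ x : B, 0 ≤ σ x + (m (x : V) : ℤ) - 1 := by
    intro x
    have := hi x
    simp only [hσdef]
    omega
  have hσv : σ ⟨v, hvB⟩ = 0 := by
    have h' := hcomm ⟨v, hvB⟩
    have h2 : (((si ⟨v, hvB⟩).2 : ℕ) : Fin n) = (((si ⟨v, hvB⟩).1 : ℕ) : Fin n) :=
      add_left_cancel h'
    have h3 : (si ⟨v, hvB⟩).2 = (si ⟨v, hvB⟩).1 := by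
      have hiv := hi ⟨v, hvB⟩
      have hsv := hs ⟨v, hvB⟩
      have hvv := congrArg Fin.val h2
      rw [Fin.val_cast_of_lt (lt_of_lt_of_le hiv (hmn v)),
        Fin.val_cast_of_lt (lt_of_lt_of_le hsv (hmn v))] at hvv
      exact hvv
    simp [hσdef, h3]
  -- the key acyclicity contradiction
  have key : ∀ (x y : B) (z1 z2 : ℤ), σ x ≤ z1 → z1 ≤ σ x + (m (x : V) : ℤ) - 1 →
      σ y ≤ z2 → z2 ≤ σ y + (m (y : V) : ℤ) - 1 → z2 + n ≤ z1 → False := by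
    intro x y z1 z2 hx1 hx2 hy1 hy2 hz
    set X : Finset V := {v, (x : V), (y : V)} with hX
    have hcard : X.card ≤ 3 := by
      refine (Finset.card_insert_le _ _).trans (Nat.add_le_add_right ?_ 1)
      exact (Finset.card_insert_le _ _).trans (by simp)
    set U := ⨆ z ∈ X, A z with hU
    have hle : ∀ t, t ∈ X → A t ≤ U := by
      intro t ht
      exact le_iSup₂ (f := fun z (_ : z ∈ X) => A z) t ht
    have hUadj : ∀ t, t ∈ X → ∀ p q, (A t).Adj p q → U.Adj p q :=
      fun t ht p q hpq => (hle t ht).2 hpq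
    have hall : ∀ b : Fin n, U.Adj b (b + 1) := by
      intro b
      set q : ℤ := (((b - a v).val : ℕ) : ℤ) with hq
      have hq0 : 0 ≤ q := Int.natCast_nonneg _
      have hqn : q ≤ (n : ℤ) - 1 := by
        have := (b - a v).isLt
        omega
      have hb : b = a v + (q : Fin n) := by
        rw [hq]
        push_cast
        ring
      have hb1 : b + 1 = a v + ((q + 1 : ℤ) : Fin n) := by
        rw [hb]
        push_cast
        ring
      rcases le_or_gt q ((m v : ℤ) - 2) with hcase | hcase
      · have he := hedgez ⟨v, hvB⟩ q (by rw [hσv]; exact hq0) (by rw [hσv]; push_cast; omega)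
        rw [hb1, hb]
        exact hUadj v (by simp [hX]) _ _ he
      · have hmv1 : (1 : ℤ) ≤ (m v : ℤ) := by exact_mod_cast hm1 v
        have hσlex := hσle x
        have hσley := hσle y
        have hiy := hi y
        rcases le_or_gt (q + 1) (z2 + n) with hc2 | hc2
        · have he := hedgez x q (by omega) (by omega)
          rw [hb1, hb]
          exact hUadj _ (by simp [hX]) _ _ he
        · have hyi2 : σ y + ((si y).2 : ℤ) = ((si y).1 : ℤ) := by
            simp only [hσdef]; ring
          have hsy0 : (0 : ℤ) ≤ ((si y).1 : ℤ) := Int.natCast_nonneg _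
          have he := hedgez y (q - n) (by omega) (by omega)
          have hc1' : ((q - n : ℤ) : Fin n) = (q : Fin n) := by
            push_cast
            simp
          have hc2' : ((q - n + 1 : ℤ) : Fin n) = ((q + 1 : ℤ) : Fin n) := by
            push_cast
            simp
          rw [hc1', hc2'] at he
          rw [hb1, hb]
          exact hUadj _ (by simp [hX]) _ _ he
    have huniv : ∀ p : Fin n, p ∈ U.verts := fun p => U.edge_vert (hall p)
    have hUiff : ∀ p r : Fin n, U.Adj p r ↔ (cycleGraph n).Adj p r := by
      intro p r
      constructor
      · exact fun h' => U.adj_sub h'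
      · intro h'
        rw [cycleGraph_adj'] at h'
        rcases h' with h1 | h1
        · have hpr : p = r + 1 := by
            have h2 : p - r = 1 := Fin.ext (by rw [h1, hval1])
            rw [← h2]; ring
          rw [hpr]
          exact (hall r).symm
        · have hpr : r = p + 1 := by
            have h2 : r - p = 1 := Fin.ext (by rw [h1, hval1])
            rw [← h2]; ring
          rw [hpr]
          exact hall p
    let e : U.coe ≃g cycleGraph n :=
      { toFun := fun p => (p : Fin n)
        invFun := fun p => ⟨p, huniv p⟩
        left_inv := fun p => Subtype.ext rfl
        right_inv := fun p => rfl
        map_rel_iff' := by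
          intro p r
          exact Iff.symm (hUiff _ _) }
    obtain ⟨c0, c, hc⟩ : ∃ (c0 : Fin n) (c : (cycleGraph n).Walk c0 c0), c.IsCycle := by
      have hna := cycleGraph_not_isAcyclic hn3
      unfold SimpleGraph.IsAcyclic at hna
      push_neg at hna
      exact hna
    have hacU := hacyc X hcard
    exact hacU (c.map e.symm.toHom)
      ((SimpleGraph.Walk.map_isCycle_iff_of_injective (e.symm.injective)).mpr hc)
  -- the interval representation
  refine ⟨fun x => Set.Icc ((σ x : ℝ)) (((σ x + (m (x : V) : ℤ) - 1 : ℤ) : ℝ)), ?_, ?_⟩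
  · intro x
    refine ⟨_, _, ?_, rfl⟩
    have hx1 : (σ x : ℤ) ≤ σ x + (m (x : V) : ℤ) - 1 := by
      have := hm1 (x : V)
      omega
    exact_mod_cast hx1
  · intro x y hxy
    have hne : (x : V) ≠ (y : V) := fun hc => hxy (Subtype.ext hc)
    constructor
    · intro hadjxy
      have hG : G.Adj (x : V) (y : V) := hadjxy.1
      obtain ⟨p, hpx, hpy⟩ := (hGadj _ _ hne).mp hG
      obtain ⟨i1, hi1, hp1⟩ := (hverts _ p).mp hpx
      obtain ⟨i2, hi2, hp2⟩ := (hverts _ p).mp hpy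
      set z1 : ℤ := σ x + (i1 : ℤ) with hz1
      set z2 : ℤ := σ y + (i2 : ℤ) with hz2
      have hv1 : p = a v + (z1 : Fin n) := by
        rw [hp1]; exact hvert x i1 z1 (by omega)
      have hv2 : p = a v + (z2 : Fin n) := by
        rw [hp2]; exact hvert y i2 z2 (by omega)
      have hcast : ((z1 : ℤ) : Fin n) = ((z2 : ℤ) : Fin n) := by
        have := hv1.symm.trans hv2
        exact add_left_cancel this
      have hdvd : (n : ℤ) ∣ z2 - z1 := by
        have := (CharP.intCast_eq_intCast (Fin n) n).mp hcast
        exact Int.ModEq.dvd this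
      obtain ⟨k, hk⟩ := hdvd
      rcases lt_trichotomy k 0 with hk0 | hk0 | hk0
      · exfalso
        have hnk : z1 ≥ z2 + n := by
          have h1 : (n : ℤ) * k ≤ (n : ℤ) * (-1) := by
            apply mul_le_mul_of_nonneg_left (by omega) (by positivity)
          omega
        exact key x y z1 z2 (by omega) (by omega) (by omega) (by omega) hnk
      · have hz12 : z1 = z2 := by rw [hk0, mul_zero] at hk; omega
        refine ⟨(z1 : ℝ), ?_, ?_⟩
        · constructor
          · exact_mod_cast (by omega : σ x ≤ z1)
          · exact_mod_cast (by omega : z1 ≤ σ x + (m (x : V) : ℤ) - 1)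
        · constructor
          · exact_mod_cast (by omega : σ y ≤ z1)
          · exact_mod_cast (by omega : z1 ≤ σ y + (m (y : V) : ℤ) - 1)
      · exfalso
        have hnk : z2 ≥ z1 + n := by
          have h1 : (n : ℤ) * 1 ≤ (n : ℤ) * k := by
            apply mul_le_mul_of_nonneg_left (by omega) (by positivity)
          omega
        exact key y x z2 z1 (by omega) (by omega) (by omega) (by omega) hnk
    · rintro ⟨r, ⟨hr1, hr2⟩, hr3, hr4⟩
      have h12 : (σ x : ℤ) ≤ σ y + (m (y : V) : ℤ) - 1 := by
        exact_mod_cast hr1.trans hr4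
      have h21 : (σ y : ℤ) ≤ σ x + (m (x : V) : ℤ) - 1 := by
        exact_mod_cast hr3.trans hr2
      set z : ℤ := max (σ x) (σ y) with hzdef
      have hmx := hm1 (x : V)
      have hmy := hm1 (y : V)
      have hpx := hmemz x z (le_max_left _ _) (by omega)
      have hpy := hmemz y z (le_max_right _ _) (by omega)
      have hG : G.Adj (x : V) (y : V) := (hGadj _ _ hne).mpr ⟨_, hpx, hpy⟩
      have hdx : G.dist v (x : V) ≤ 3 / 2 := x.2.2
      have hdy : G.dist v (y : V) ≤ 3 / 2 := y.2.2
      exact ⟨hG, x.2, y.2, by omega⟩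
end
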